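/- arXiv:1302.1114 — 5 statements merged into one kernel-verified Lean document; each statement's English description precedes it below -/
import Mathlib

section
/- Let f, g : (0,1) → ℝ be nonincreasing, bounded functions with f(s) > 0 and g(s) > 0 for all s ∈ (0,1), and such that log∘f and log∘g are Lebesgue integrable on (0,1). Then the following are equivalent: (i) ∫₀ᵗ log(g(s)) ds ≤ ∫₀ᵗ log(f(s)) ds for all t ∈ (0,1]; (ii) ∫₀¹ log₊(g(s)/t) ds ≤ ∫₀¹ log₊(f(s)/t) ds for all t > 0. -/
open MeasureTheory Real Set


lemma truncB (h : ℝ → ℝ) (c a : ℝ) (ha0 : 0 ≤ a) (ha1 : a ≤ 1)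
    (hint : IntegrableOn h (Ioo (0:ℝ) 1)) :
    (∫ s in Ioo (0:ℝ) a, h s) - c * a ≤ ∫ s in Ioo (0:ℝ) 1, max (h s - c) 0 := by
  have hsub : Ioo (0:ℝ) a ⊆ Ioo 0 1 := Ioo_subset_Ioo le_rfl ha1
  have hint' : IntegrableOn h (Ioo (0:ℝ) a) := hint.mono_set hsub
  have hmaxint : IntegrableOn (fun s => max (h s - c) 0) (Ioo (0:ℝ) 1) :=
    (hint.sub (integrableOn_const (by simp) (by simp))).pos_part
  have hvol : (volume (Ioo (0:ℝ) a)).toReal = a := by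
    rw [Real.volume_Ioo, sub_zero, ENNReal.toReal_ofReal ha0]
  calc (∫ s in Ioo (0:ℝ) a, h s) - c * a
      = ∫ s in Ioo (0:ℝ) a, (h s - c) := by
        rw [integral_sub hint' (integrableOn_const (by simp) (by simp)), setIntegral_const]
        rw [measureReal_def, hvol, smul_eq_mul, mul_comm]
    _ ≤ ∫ s in Ioo (0:ℝ) a, max (h s - c) 0 := by
        apply setIntegral_mono_on (hint'.sub (integrableOn_const (by simp) (by simp)))
          (hmaxint.mono_set hsub) measurableSet_Ioo
        intro x _; exact le_max_left _ _
    _ ≤ ∫ s in Ioo (0:ℝ) 1, max (h s - c) 0 := by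
        apply setIntegral_mono_set hmaxint
        · filter_upwards with x using le_max_right _ _
        · exact HasSubset.Subset.eventuallyLE hsub

lemma truncA (h : ℝ → ℝ) (c a : ℝ) (ha0 : 0 ≤ a) (ha1 : a ≤ 1)
    (hint : IntegrableOn h (Ioo (0:ℝ) 1))
    (hge : ∀ s ∈ Ioo (0:ℝ) a, c ≤ h s)
    (hle : ∀ s ∈ Ioo a (1:ℝ), h s ≤ c) :
    ∫ s in Ioo (0:ℝ) 1, max (h s - c) 0 = (∫ s in Ioo (0:ℝ) a, h s) - c * a := by
  have hsub : Ioo (0:ℝ) a ⊆ Ioo 0 1 := Ioo_subset_Ioo le_rfl ha1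
  have hne : ∀ᵐ s ∂(volume.restrict (Ioo (0:ℝ) 1)), s ≠ a := by
    refine ae_restrict_of_ae ?_
    rw [ae_iff]
    have : {x : ℝ | ¬ x ≠ a} = {a} := by ext x; simp
    rw [this]; exact Real.volume_singleton
  have heq : (fun s => max (h s - c) 0)
      =ᶠ[ae (volume.restrict (Ioo (0:ℝ) 1))] (Ioo (0:ℝ) a).indicator (fun s => h s - c) := by
    filter_upwards [ae_restrict_mem measurableSet_Ioo, hne] with s hs hsa
    rcases lt_trichotomy s a with h1 | h1 | h1
    · have hmem : s ∈ Ioo (0:ℝ) a := ⟨hs.1, h1⟩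
      rw [indicator_of_mem hmem, max_eq_left (by linarith [hge s hmem])]
    · exact absurd h1 hsa
    · have : h s ≤ c := hle s ⟨h1, hs.2⟩
      rw [indicator_of_notMem (by simp [h1, not_lt.2 h1.le]), max_eq_right (by linarith)]
  rw [integral_congr_ae heq, setIntegral_indicator measurableSet_Ioo,
    inter_eq_self_of_subset_right hsub,
    integral_sub (hint.mono_set hsub) (integrableOn_const (by simp) (by simp)), setIntegral_const]
  rw [measureReal_def, Real.volume_Ioo, sub_zero, ENNReal.toReal_ofReal ha0, smul_eq_mul, mul_comm]


theorem log_submajorization_iff_log_plus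
    (f g : ℝ → ℝ)
    (hf_anti : AntitoneOn f (Ioo (0:ℝ) 1)) (hg_anti : AntitoneOn g (Ioo (0:ℝ) 1))
    (hf_bdd : ∃ C : ℝ, ∀ s ∈ Ioo (0:ℝ) 1, f s ≤ C)
    (hg_bdd : ∃ C : ℝ, ∀ s ∈ Ioo (0:ℝ) 1, g s ≤ C)
    (hf_pos : ∀ s ∈ Ioo (0:ℝ) 1, 0 < f s) (hg_pos : ∀ s ∈ Ioo (0:ℝ) 1, 0 < g s)
    (hf_int : IntegrableOn (fun s => log (f s)) (Ioo (0:ℝ) 1))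
    (hg_int : IntegrableOn (fun s => log (g s)) (Ioo (0:ℝ) 1)) :
    (∀ t ∈ Ioc (0:ℝ) 1,
        ∫ s in Ioo (0:ℝ) t, log (g s) ≤ ∫ s in Ioo (0:ℝ) t, log (f s)) ↔
    (∀ t : ℝ, 0 < t →
        ∫ s in Ioo (0:ℝ) 1, max (log (g s / t)) 0 ≤
          ∫ s in Ioo (0:ℝ) 1, max (log (f s / t)) 0) := by
  have hcongr : ∀ (h : ℝ → ℝ), (∀ s ∈ Ioo (0:ℝ) 1, 0 < h s) → ∀ t : ℝ, 0 < t →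
      ∫ s in Ioo (0:ℝ) 1, max (log (h s / t)) 0
        = ∫ s in Ioo (0:ℝ) 1, max (log (h s) - log t) 0 := by
    intro h hpos t ht
    refine setIntegral_congr_fun measurableSet_Ioo (fun s hs => ?_)
    rw [Real.log_div (hpos s hs).ne' ht.ne']
  constructor
  · intro H t' ht'
    rw [hcongr g hg_pos t' ht', hcongr f hf_pos t' ht']
    set c := log t' with hc
    set A := {s | s ∈ Ioo (0:ℝ) 1 ∧ t' < g s} with hA
    have hbdd : BddAbove (insert (0:ℝ) A) := by
      refine ⟨1, ?_⟩
      rintro x (rfl | hx)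
      · norm_num
      · exact hx.1.2.le
    set a := sSup (insert (0:ℝ) A) with ha
    have ha0 : 0 ≤ a := le_csSup hbdd (mem_insert _ _)
    have ha1 : a ≤ 1 := by
      refine csSup_le (insert_nonempty _ _) ?_
      rintro x (rfl | hx)
      · norm_num
      · exact hx.1.2.le
    have hge : ∀ s ∈ Ioo (0:ℝ) a, c ≤ log (g s) := by
      intro s hs
      obtain ⟨x, hx, hsx⟩ := exists_lt_of_lt_csSup ⟨0, mem_insert _ _⟩ hs.2
      have hxA : x ∈ A := by
        rcases hx with rfl | hx
        · linarith [hs.1]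
        · exact hx
      have hsmem : s ∈ Ioo (0:ℝ) 1 := ⟨hs.1, lt_trans hsx hxA.1.2⟩
      have : t' < g s := lt_of_lt_of_le hxA.2 (hg_anti hsmem hxA.1 hsx.le)
      exact Real.log_le_log ht' this.le
    have hle : ∀ s ∈ Ioo a (1:ℝ), log (g s) ≤ c := by
      intro s hs
      have hsmem : s ∈ Ioo (0:ℝ) 1 := ⟨lt_of_le_of_lt ha0 hs.1, hs.2⟩
      have hsA : s ∉ A := fun hsA => absurd (le_csSup hbdd (mem_insert_of_mem _ hsA)) (not_le.2 hs.1)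
      have : g s ≤ t' := le_of_not_gt (fun hlt => hsA ⟨hsmem, hlt⟩)
      exact Real.log_le_log (hg_pos s hsmem) this
    have key : ∫ s in Ioo (0:ℝ) a, log (g s) ≤ ∫ s in Ioo (0:ℝ) a, log (f s) := by
      rcases eq_or_lt_of_le ha0 with h0 | h0
      · rw [← h0]; simp
      · exact H a ⟨h0, ha1⟩
    calc ∫ s in Ioo (0:ℝ) 1, max (log (g s) - c) 0
        = (∫ s in Ioo (0:ℝ) a, log (g s)) - c * a :=
          truncA _ c a ha0 ha1 hg_int hge hle
      _ ≤ (∫ s in Ioo (0:ℝ) a, log (f s)) - c * a := by linarith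
      _ ≤ ∫ s in Ioo (0:ℝ) 1, max (log (f s) - c) 0 :=
          truncB _ c a ha0 ha1 hf_int
  · intro H2
    have main : ∀ t ∈ Ioo (0:ℝ) 1,
        ∫ s in Ioo (0:ℝ) t, log (g s) ≤ ∫ s in Ioo (0:ℝ) t, log (f s) := by
      intro t ht
      set c := log (f t) with hc
      have h2 := H2 (f t) (hf_pos t ht)
      rw [hcongr g hg_pos (f t) (hf_pos t ht), hcongr f hf_pos (f t) (hf_pos t ht)] at h2
      have hge : ∀ s ∈ Ioo (0:ℝ) t, c ≤ log (f s) := by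
        intro s hs
        have hsmem : s ∈ Ioo (0:ℝ) 1 := ⟨hs.1, lt_trans hs.2 ht.2⟩
        exact Real.log_le_log (hf_pos t ht) (hf_anti hsmem ht hs.2.le)
      have hle : ∀ s ∈ Ioo t (1:ℝ), log (f s) ≤ c := by
        intro s hs
        have hsmem : s ∈ Ioo (0:ℝ) 1 := ⟨lt_trans ht.1 hs.1, hs.2⟩
        exact Real.log_le_log (hf_pos s hsmem) (hf_anti ht hsmem hs.1.le)
      have hA := truncA (fun s => log (f s)) c t ht.1.le ht.2.le hf_int hge hle
      have hB := truncB (fun s => log (g s)) c t ht.1.le ht.2.le hg_int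
      linarith
    intro t ht
    rcases lt_or_eq_of_le ht.2 with h1 | h1
    · exact main t ⟨ht.1, h1⟩
    · subst h1
      set u : ℕ → ℝ := fun n => 1 - 1/(n+2) with hu
      have hu01 : ∀ n, u n ∈ Ioo (0:ℝ) 1 := by
        intro n
        constructor
        · have h2 : (1:ℝ)/(n+2) < 1 := by
            rw [div_lt_one (by positivity)]
            have : (0:ℝ) ≤ n := Nat.cast_nonneg n
            linarith
          simp only [hu]; linarith
        · have : (0:ℝ) < 1/(n+2) := by positivity
          simp only [hu]; linarith
      have hmono : Monotone (fun n => Ioo (0:ℝ) (u n)) := by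
        intro m n hmn
        apply Ioo_subset_Ioo le_rfl
        have : (1:ℝ)/(n+2) ≤ 1/(m+2) := by
          apply div_le_div_of_nonneg_left (by norm_num) (by positivity)
          have : (m:ℝ) ≤ n := Nat.cast_le.2 hmn
          linarith
        simp only [hu]; linarith
      have hunion : (⋃ n, Ioo (0:ℝ) (u n)) = Ioo (0:ℝ) 1 := by
        ext x
        simp only [mem_iUnion, mem_Ioo]
        constructor
        · rintro ⟨n, hx0, hxu⟩
          exact ⟨hx0, lt_of_lt_of_le hxu (hu01 n).2.le⟩
        · rintro ⟨hx0, hx1⟩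
          obtain ⟨n, hn⟩ := exists_nat_one_div_lt (show (0:ℝ) < 1 - x by linarith)
          refine ⟨n, hx0, ?_⟩
          have h2 : (1:ℝ)/(n+2) ≤ 1/(n+1) := by
            apply div_le_div_of_nonneg_left (by norm_num) (by positivity)
            linarith
          simp only [hu]; linarith
      have htg := tendsto_setIntegral_of_monotone (fun n => measurableSet_Ioo) hmono
        (by rw [hunion]; exact hg_int)
      have htf := tendsto_setIntegral_of_monotone (fun n => measurableSet_Ioo) hmono
        (by rw [hunion]; exact hf_int)
      rw [hunion] at htg htf
      exact le_of_tendsto_of_tendsto' htg htf (fun n => main (u n) (hu01 n))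
end

section
/- Let f, g : (0,1) → ℝ be nonincreasing, bounded functions with f(s) > 0 and g(s) > 0 for all s ∈ (0,1), such that log∘f and log∘g are Lebesgue integrable on (0,1), and suppose g is logarithmically submajorized by f, i.e., ∫₀ᵗ log(g(s)) ds ≤ ∫₀ᵗ log(f(s)) ds for all t ∈ (0,1]. Then 1+g is logarithmically submajorized by 1+f, i.e., ∫₀ᵗ log(1+g(s)) ds ≤ ∫₀ᵗ log(1+f(s)) ds for all t ∈ (0,1]. -/
open MeasureTheory Real Set
open Filter Topology

noncomputable def lw (c : ℝ) : ℝ := Real.exp c / (1 + Real.exp c)^2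

lemma lw_pos (c : ℝ) : 0 < lw c := by
  have h : (0:ℝ) < 1 + Real.exp c := by positivity
  exact div_pos (Real.exp_pos c) (by positivity)

noncomputable def lG (x c : ℝ) : ℝ := (x - c) * (Real.exp c / (1 + Real.exp c)) + Real.log (1 + Real.exp c)

lemma lG_hasDerivAt (x c : ℝ) : HasDerivAt (lG x) ((x - c) * lw c) c := by
  have h1 : (0:ℝ) < 1 + Real.exp c := by positivity
  have hσ : HasDerivAt (fun c => Real.exp c / (1 + Real.exp c)) (lw c) c := by
    have := (Real.hasDerivAt_exp c).div ((hasDerivAt_const c (1:ℝ)).add (Real.hasDerivAt_exp c)) h1.ne'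
    refine this.congr_deriv ?_
    unfold lw
    simp only [Pi.add_apply]
    ring
  have hlog : HasDerivAt (fun c => Real.log (1 + Real.exp c)) (Real.exp c / (1 + Real.exp c)) c := by
    have := (Real.hasDerivAt_exp c).const_add (1:ℝ)
    refine ((Real.hasDerivAt_log h1.ne').comp c this).congr_deriv ?_
    ring
  have hmul : HasDerivAt (fun c => (x - c) * (Real.exp c / (1 + Real.exp c)))
      ((-1) * (Real.exp c / (1 + Real.exp c)) + (x - c) * lw c) c :=
    (((hasDerivAt_id c).const_sub x)).mul hσ
  have := hmul.add hlog
  refine this.congr_deriv ?_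
  ring

lemma lG_tendsto (x : ℝ) : Tendsto (lG x) atBot (𝓝 0) := by
  have h1 : Tendsto (fun c : ℝ => (x - c) * (Real.exp c / (1 + Real.exp c))) atBot (𝓝 0) := by
    have hb : ∀ᶠ c in atBot, |(x - c) * (Real.exp c / (1 + Real.exp c))| ≤ (x - c) * Real.exp c := by
      filter_upwards [eventually_le_atBot x] with c hc
      have h2 : (0:ℝ) < 1 + Real.exp c := by positivity
      have h3 : Real.exp c / (1 + Real.exp c) ≤ Real.exp c := by
        rw [div_le_iff₀ h2]
        nlinarith [Real.exp_pos c, Real.exp_nonneg c]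
      have h4 : 0 ≤ x - c := by linarith
      rw [abs_of_nonneg (by positivity)]
      exact mul_le_mul_of_nonneg_left h3 h4
    have h5 : Tendsto (fun c : ℝ => (x - c) * Real.exp c) atBot (𝓝 0) := by
      have hxc : Tendsto (fun c : ℝ => x * Real.exp c) atBot (𝓝 0) := by
        simpa using (Real.tendsto_exp_atBot.const_mul x)
      have hce : Tendsto (fun c : ℝ => c * Real.exp c) atBot (𝓝 0) := by
        have h := ((Real.tendsto_pow_mul_exp_neg_atTop_nhds_zero 1).comp tendsto_neg_atBot_atTop).neg
        simp only [Function.comp] at h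
        convert h using 2 with c
        simp [pow_one]; ring
      have := hxc.sub hce
      simpa [sub_mul] using this
    exact squeeze_zero_norm' hb h5
  have h2 : Tendsto (fun c : ℝ => Real.log (1 + Real.exp c)) atBot (𝓝 0) := by
    have : Tendsto (fun c : ℝ => 1 + Real.exp c) atBot (𝓝 1) := by
      simpa using Real.tendsto_exp_atBot.const_add 1
    simpa [Function.comp_def] using (Real.continuousAt_log (by norm_num)).tendsto.comp this
  unfold lG
  simpa using h1.add h2

lemma lGr_hasDerivAt (x u : ℝ) :
    HasDerivAt (fun u => -(lG x (x - u))) (u * lw (x - u)) u := by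
  have h1 : HasDerivAt (fun u : ℝ => x - u) (-1) u := (hasDerivAt_id u).const_sub x
  have h2 := (lG_hasDerivAt x (x - u)).comp u h1
  have := h2.neg
  refine this.congr_deriv ?_
  ring_nf

lemma lw_integrableOn_Ioi (x : ℝ) : IntegrableOn (fun u => u * lw (x - u)) (Ioi (0:ℝ)) :=
  integrableOn_Ioi_deriv_of_nonneg' (fun u _ => lGr_hasDerivAt x u)
    (fun u hu => le_of_lt (mul_pos hu (lw_pos _)))
    (by
      have : Tendsto (fun u : ℝ => x - u) atTop atBot := tendsto_atBot_add_const_left atTop x tendsto_neg_atTop_atBot |>.congr (fun u => by ring)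
      simpa using ((lG_tendsto x).comp this).neg)

lemma lw_integral_Ioi (x : ℝ) :
    ∫ u in Ioi (0:ℝ), u * lw (x - u) = Real.log (1 + Real.exp x) := by
  have h := integral_Ioi_of_hasDerivAt_of_nonneg' (fun u (_ : u ∈ Ici (0:ℝ)) => lGr_hasDerivAt x u)
    (fun u hu => le_of_lt (mul_pos hu (lw_pos _)))
    (l := 0)
    (by
      have : Tendsto (fun u : ℝ => x - u) atTop atBot := tendsto_atBot_add_const_left atTop x tendsto_neg_atTop_atBot |>.congr (fun u => by ring)
      simpa using ((lG_tendsto x).comp this).neg)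
  rw [h]
  simp [lG]

lemma lw_phi_integrable (x : ℝ) : Integrable (fun u => max u 0 * lw (x - u)) := by
  rw [← integrableOn_univ, ← Iic_union_Ioi (a := (0:ℝ))]
  refine IntegrableOn.union ?_ ?_
  · refine (integrableOn_zero (s := Iic (0:ℝ))).congr_fun ?_ measurableSet_Iic
    intro u hu
    simp [max_eq_right (mem_Iic.mp hu)]
  · exact (lw_integrableOn_Ioi x).congr_fun
      (fun u hu => by simp [max_eq_left (le_of_lt (mem_Ioi.mp hu))]) measurableSet_Ioi

lemma lw_phi_integral (x : ℝ) :
    ∫ u, max u 0 * lw (x - u) = Real.log (1 + Real.exp x) := by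
  rw [← setIntegral_eq_integral_of_forall_compl_eq_zero
      (s := Ioi (0:ℝ)) (fun u hu => by simp [max_eq_right (le_of_not_gt (by simpa using hu))])]
  rw [← lw_integral_Ioi x]
  exact setIntegral_congr_fun measurableSet_Ioi
    (fun u hu => by simp [max_eq_left (le_of_lt (mem_Ioi.mp hu))])

lemma sub_left_measurableEmbedding (x : ℝ) : MeasurableEmbedding (fun c : ℝ => x - c) := by
  have : (fun c : ℝ => x - c) = fun c : ℝ => x + (-c) := by funext c; ring
  rw [this]
  exact ((Homeomorph.neg ℝ).trans (Homeomorph.addLeft x)).measurableEmbedding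

lemma sub_left_measurePreserving (x : ℝ) :
    MeasurePreserving (fun c : ℝ => x - c) volume volume :=
  Measure.measurePreserving_sub_left volume x

lemma lw_repr_integrable (x : ℝ) : Integrable (fun c => max (x - c) 0 * lw c) := by
  have h := (sub_left_measurePreserving x).integrable_comp_emb (sub_left_measurableEmbedding x)
    (g := fun u => max u 0 * lw (x - u))
  have := h.mpr (lw_phi_integrable x)
  refine this.congr (Filter.Eventually.of_forall fun c => ?_)
  simp [Function.comp]

lemma lw_repr (x : ℝ) : ∫ c, max (x - c) 0 * lw c = Real.log (1 + Real.exp x) := by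
  have h := (sub_left_measurePreserving x).integral_comp (sub_left_measurableEmbedding x)
    (fun u => max u 0 * lw (x - u))
  rw [← lw_phi_integral x, ← h]
  congr 1
  funext c
  have : x - (x - c) = c := by ring
  rw [this]

lemma lemmaB (h k : ℝ → ℝ)
    (hha : AntitoneOn h (Ioo (0:ℝ) 1))
    (hhi : IntegrableOn h (Ioo (0:ℝ) 1)) (hki : IntegrableOn k (Ioo (0:ℝ) 1))
    (hmaj : ∀ a ∈ Ioc (0:ℝ) 1, ∫ s in Ioo (0:ℝ) a, h s ≤ ∫ s in Ioo (0:ℝ) a, k s)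
    (c : ℝ) (t : ℝ) (ht : t ∈ Ioc (0:ℝ) 1) :
    ∫ s in Ioo (0:ℝ) t, max (h s - c) 0 ≤ ∫ s in Ioo (0:ℝ) t, max (k s - c) 0 := by
  obtain ⟨ht0, ht1⟩ := ht
  have hsub : Ioo (0:ℝ) t ⊆ Ioo (0:ℝ) 1 := Ioo_subset_Ioo le_rfl ht1
  have hhm : IntegrableOn (fun s => max (h s - c) 0) (Ioo (0:ℝ) t) :=
    ((hhi.mono_set hsub).sub (integrableOn_const (by simp))).pos_part
  have hkm : IntegrableOn (fun s => max (k s - c) 0) (Ioo (0:ℝ) t) :=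
    ((hki.mono_set hsub).sub (integrableOn_const (by simp))).pos_part
  have hknn : 0 ≤ ∫ s in Ioo (0:ℝ) t, max (k s - c) 0 :=
    setIntegral_nonneg measurableSet_Ioo (fun s _ => le_max_right _ _)
  set A : Set ℝ := {s ∈ Ioo (0:ℝ) t | c < h s} with hA
  by_cases hAe : A = ∅
  · have : ∫ s in Ioo (0:ℝ) t, max (h s - c) 0 = 0 := by
      rw [setIntegral_congr_fun measurableSet_Ioo (g := fun _ => (0:ℝ))]
      · simp
      · intro s hs
        have h2 : ¬ c < h s := fun hc => (eq_empty_iff_forall_notMem.mp hAe s) ⟨hs, hc⟩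
        simp only [max_eq_right (show h s - c ≤ 0 from sub_nonpos.mpr (not_lt.mp h2))]
    linarith
  · have hAne : A.Nonempty := Set.nonempty_iff_ne_empty.mpr hAe
    have hAbdd : BddAbove A := ⟨t, fun u hu => le_of_lt hu.1.2⟩
    set a := sSup A with ha
    obtain ⟨u0, hu0⟩ := id hAne
    have ha0 : 0 < a := lt_of_lt_of_le hu0.1.1 (le_csSup hAbdd hu0)
    have hat : a ≤ t := csSup_le hAne (fun u hu => le_of_lt hu.1.2)
    have ha1 : a ≤ 1 := le_trans hat ht1
    have claim1 : ∀ s ∈ Ioo (0:ℝ) a, c < h s := by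
      intro s hs
      obtain ⟨u, huA, hsu⟩ := exists_lt_of_lt_csSup hAne hs.2
      have hs1 : s ∈ Ioo (0:ℝ) 1 := ⟨hs.1, lt_of_lt_of_le hs.2 (le_trans hat ht1)⟩
      have hu1 : u ∈ Ioo (0:ℝ) 1 := hsub huA.1
      exact lt_of_lt_of_le huA.2 (hha hs1 hu1 (le_of_lt hsu))
    have claim2 : ∀ s ∈ Ioo a t, h s ≤ c := by
      intro s hs
      by_contra hc
      have : s ∈ A := ⟨⟨lt_trans ha0 hs.1, hs.2⟩, not_le.mp hc⟩
      exact absurd (le_csSup hAbdd this) (not_le.mpr hs.1)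
    -- split the integral
    have hsplit : Ioo (0:ℝ) t = Ioo 0 a ∪ Ico a t := (Ioo_union_Ico_eq_Ioo ha0 hat).symm
    have hdisj : Disjoint (Ioo (0:ℝ) a) (Ico a t) := by
      rw [Set.disjoint_left]
      intro x hx1 hx2
      exact absurd hx2.1 (not_le.mpr hx1.2)
    have heq1 : ∫ s in Ioo (0:ℝ) t, max (h s - c) 0
        = (∫ s in Ioo (0:ℝ) a, max (h s - c) 0) + ∫ s in Ico a t, max (h s - c) 0 := by
      rw [hsplit] at hhm ⊢
      exact setIntegral_union hdisj measurableSet_Ico (hhm.mono_set subset_union_left)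
        (hhm.mono_set subset_union_right)
    have heq2 : ∫ s in Ico a t, max (h s - c) 0 = 0 := by
      rw [integral_Ico_eq_integral_Ioo]
      rw [setIntegral_congr_fun measurableSet_Ioo (g := fun _ => (0:ℝ))]
      · simp
      · intro s hs
        simp only [max_eq_right (show h s - c ≤ 0 from sub_nonpos.mpr (claim2 s hs))]
    have heq3 : ∫ s in Ioo (0:ℝ) a, max (h s - c) 0 = (∫ s in Ioo (0:ℝ) a, h s) - c * a := by
      rw [setIntegral_congr_fun measurableSet_Ioo (g := fun s => h s - c)]
      · rw [integral_sub (hhi.mono_set (Ioo_subset_Ioo le_rfl ha1)) (integrableOn_const (by simp))]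
        rw [setIntegral_const]
        simp [Real.volume_Ioo, ENNReal.toReal_ofReal (le_of_lt ha0), mul_comm, le_of_lt ha0]
      · intro s hs
        have h3 := claim1 s hs
        simp only [max_eq_left (show (0:ℝ) ≤ h s - c from by linarith)]
    have hle1 : (∫ s in Ioo (0:ℝ) a, h s) ≤ ∫ s in Ioo (0:ℝ) a, k s := hmaj a ⟨ha0, ha1⟩
    have hle2 : (∫ s in Ioo (0:ℝ) a, k s) - c * a ≤ ∫ s in Ioo (0:ℝ) a, max (k s - c) 0 := by
      have : (∫ s in Ioo (0:ℝ) a, k s) - c * a = ∫ s in Ioo (0:ℝ) a, (k s - c) := by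
        rw [integral_sub (hki.mono_set (Ioo_subset_Ioo le_rfl ha1)) (integrableOn_const (by simp))]
        rw [setIntegral_const]
        simp [Real.volume_Ioo, ENNReal.toReal_ofReal (le_of_lt ha0), mul_comm, le_of_lt ha0]
      rw [this]
      refine setIntegral_mono_on ?_ ?_ measurableSet_Ioo (fun s _ => le_max_left _ _)
      · exact (hki.mono_set (Ioo_subset_Ioo le_rfl ha1)).sub (integrableOn_const (by simp))
      · exact hkm.mono_set (Ioo_subset_Ioo le_rfl hat)
    have hle3 : ∫ s in Ioo (0:ℝ) a, max (k s - c) 0 ≤ ∫ s in Ioo (0:ℝ) t, max (k s - c) 0 := by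
      refine setIntegral_mono_set hkm ?_ ?_
      · exact Filter.Eventually.of_forall (fun s => le_max_right _ _)
      · exact HasSubset.Subset.eventuallyLE (Ioo_subset_Ioo le_rfl hat)
    linarith

lemma psi_le (x : ℝ) : Real.log (1 + Real.exp x) ≤ Real.log 2 + |x| := by
  have h1 : (0:ℝ) < 1 + Real.exp x := by positivity
  rcases le_or_gt x 0 with hx | hx
  · have h2 : 1 + Real.exp x ≤ 2 := by
      have := Real.exp_le_one_iff.mpr hx
      linarith
    calc Real.log (1 + Real.exp x) ≤ Real.log 2 := Real.log_le_log h1 h2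
      _ ≤ Real.log 2 + |x| := le_add_of_nonneg_right (abs_nonneg x)
  · have h2 : 1 + Real.exp x ≤ 2 * Real.exp x := by
      have := Real.one_le_exp (le_of_lt hx)
      linarith
    calc Real.log (1 + Real.exp x) ≤ Real.log (2 * Real.exp x) := Real.log_le_log h1 h2
      _ = Real.log 2 + x := by rw [Real.log_mul (by norm_num) (Real.exp_ne_zero x), Real.log_exp]
      _ ≤ Real.log 2 + |x| := by simp [le_abs_self]

lemma psi_nonneg (x : ℝ) : 0 ≤ Real.log (1 + Real.exp x) :=
  Real.log_nonneg (by nlinarith [Real.exp_pos x])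

lemma keyineq (h k : ℝ → ℝ) (t : ℝ) (ht : t ∈ Ioc (0:ℝ) 1)
    (hh_sm : AEStronglyMeasurable h (volume.restrict (Ioo (0:ℝ) t)))
    (hk_sm : AEStronglyMeasurable k (volume.restrict (Ioo (0:ℝ) t)))
    (hhi : IntegrableOn h (Ioo (0:ℝ) t)) (hki : IntegrableOn k (Ioo (0:ℝ) t))
    (hB : ∀ c : ℝ, ∫ s in Ioo (0:ℝ) t, max (h s - c) 0 ≤ ∫ s in Ioo (0:ℝ) t, max (k s - c) 0) :
    ∫ s in Ioo (0:ℝ) t, Real.log (1 + Real.exp (h s))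
      ≤ ∫ s in Ioo (0:ℝ) t, Real.log (1 + Real.exp (k s)) := by
  set μ := volume.restrict (Ioo (0:ℝ) t) with hμ
  have hΨcont : Continuous (fun x : ℝ => Real.log (1 + Real.exp x)) := by
    refine Real.continuousOn_log.comp_continuous
      (continuous_const.add Real.continuous_exp) (fun x => ?_)
    simp only [mem_compl_iff, mem_singleton_iff]
    positivity
  -- integrability of Ψ ∘ h and Ψ ∘ k
  have hint : ∀ (φ : ℝ → ℝ), AEStronglyMeasurable φ μ → Integrable φ μ →
      Integrable (fun s => Real.log (1 + Real.exp (φ s))) μ := by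
    intro φ hsm hφi
    refine Integrable.mono ((integrable_const (Real.log 2)).add hφi.abs)
      (hΨcont.comp_aestronglyMeasurable hsm) ?_
    refine Filter.Eventually.of_forall (fun s => ?_)
    rw [Real.norm_eq_abs, abs_of_nonneg (psi_nonneg _)]
    refine le_trans (psi_le (φ s)) ?_
    simpa using le_abs_self _
  have hinth := hint h hh_sm hhi
  have hintk := hint k hk_sm hki
  -- lintegral form
  have hlint : ∀ (φ : ℝ → ℝ), AEStronglyMeasurable φ μ →
      ∫ s, Real.log (1 + Real.exp (φ s)) ∂μ
        = (∫⁻ s, ENNReal.ofReal (Real.log (1 + Real.exp (φ s))) ∂μ).toReal := by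
    intro φ hsm
    exact integral_eq_lintegral_of_nonneg_ae (Filter.Eventually.of_forall fun s => psi_nonneg _)
      (hΨcont.comp_aestronglyMeasurable hsm)
  rw [hlint h hh_sm, hlint k hk_sm]
  have hfin : (∫⁻ s, ENNReal.ofReal (Real.log (1 + Real.exp (k s))) ∂μ) ≠ ⊤ := by
    have h1 := hintk.hasFiniteIntegral
    rw [HasFiniteIntegral] at h1
    refine ne_of_lt (lt_of_le_of_lt (lintegral_mono fun s => ?_) h1)
    rw [← ofReal_norm, Real.norm_eq_abs, abs_of_nonneg (psi_nonneg _)]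
  refine ENNReal.toReal_mono hfin ?_
  -- core inequality via Tonelli
  have hswap : ∀ (φ : ℝ → ℝ), AEStronglyMeasurable φ μ →
      (∫⁻ s, ENNReal.ofReal (Real.log (1 + Real.exp (φ s))) ∂μ)
        = ∫⁻ c, (∫⁻ s, ENNReal.ofReal (max (φ s - c) 0) ∂μ) * ENNReal.ofReal (lw c) := by
    intro φ hsm
    have step1 : ∀ s : ℝ, ENNReal.ofReal (Real.log (1 + Real.exp (φ s)))
        = ∫⁻ c, ENNReal.ofReal (max (φ s - c) 0 * lw c) := by
      intro s
      rw [← lw_repr (φ s)]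
      exact ofReal_integral_eq_lintegral_ofReal (lw_repr_integrable (φ s))
        (Filter.Eventually.of_forall fun c =>
          mul_nonneg (le_max_right _ _) (le_of_lt (lw_pos c)))
    simp_rw [step1]
    have hmbl : AEMeasurable
        (fun p : ℝ × ℝ => ENNReal.ofReal (max (φ p.1 - p.2) 0 * lw p.2)) (μ.prod volume) := by
      have h1 : AEMeasurable (fun p : ℝ × ℝ => φ p.1) (μ.prod volume) :=
        hsm.aemeasurable.comp_quasiMeasurePreserving Measure.quasiMeasurePreserving_fst
      have h2 : Continuous (fun q : ℝ × ℝ => ENNReal.ofReal (max (q.1 - q.2) 0 * lw q.2)) := by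
        refine ENNReal.continuous_ofReal.comp (Continuous.mul ?_ ?_)
        · exact (continuous_fst.sub continuous_snd).max continuous_const
        · have hlwc : Continuous lw := by
            unfold lw
            exact Real.continuous_exp.div
              ((continuous_const.add Real.continuous_exp).pow 2)
              (fun c => by positivity)
          exact hlwc.comp continuous_snd
      exact h2.measurable.comp_aemeasurable (h1.prodMk measurable_snd.aemeasurable)
    rw [lintegral_lintegral_swap hmbl]
    refine lintegral_congr (fun c => ?_)
    have : ∀ s, ENNReal.ofReal (max (φ s - c) 0 * lw c)
        = ENNReal.ofReal (max (φ s - c) 0) * ENNReal.ofReal (lw c) := fun s =>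
      ENNReal.ofReal_mul (le_max_right _ _)
    simp_rw [this]
    exact lintegral_mul_const'' _ ((ENNReal.measurable_ofReal.comp_aemeasurable
      (((hsm.aemeasurable.sub aemeasurable_const).max aemeasurable_const))))
  rw [hswap h hh_sm, hswap k hk_sm]
  refine lintegral_mono (fun c => ?_)
  refine mul_le_mul_left ?_ _
  have hex : ∀ (φ : ℝ → ℝ), AEStronglyMeasurable φ μ → Integrable φ μ →
      (∫⁻ s, ENNReal.ofReal (max (φ s - c) 0) ∂μ)
        = ENNReal.ofReal (∫ s, max (φ s - c) 0 ∂μ) := by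
    intro φ hsm hφi
    exact (ofReal_integral_eq_lintegral_ofReal
      ((hφi.sub (integrable_const c)).pos_part)
      (Filter.Eventually.of_forall fun s => le_max_right _ _)).symm
  rw [hex h hh_sm hhi, hex k hk_sm hki]
  exact ENNReal.ofReal_le_ofReal (hB c)


theorem log_submajorization_add_one
    (f g : ℝ → ℝ)
    (hf_anti : AntitoneOn f (Ioo (0:ℝ) 1)) (hg_anti : AntitoneOn g (Ioo (0:ℝ) 1))
    (hf_bdd : ∃ C : ℝ, ∀ s ∈ Ioo (0:ℝ) 1, f s ≤ C)
    (hg_bdd : ∃ C : ℝ, ∀ s ∈ Ioo (0:ℝ) 1, g s ≤ C)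
    (hf_pos : ∀ s ∈ Ioo (0:ℝ) 1, 0 < f s) (hg_pos : ∀ s ∈ Ioo (0:ℝ) 1, 0 < g s)
    (hf_int : IntegrableOn (fun s => log (f s)) (Ioo (0:ℝ) 1))
    (hg_int : IntegrableOn (fun s => log (g s)) (Ioo (0:ℝ) 1))
    (hmaj : ∀ t ∈ Ioc (0:ℝ) 1,
        ∫ s in Ioo (0:ℝ) t, log (g s) ≤ ∫ s in Ioo (0:ℝ) t, log (f s)) :
    ∀ t ∈ Ioc (0:ℝ) 1,
        ∫ s in Ioo (0:ℝ) t, log (1 + g s) ≤ ∫ s in Ioo (0:ℝ) t, log (1 + f s) := by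
  intro t ht
  have hsub : Ioo (0:ℝ) t ⊆ Ioo (0:ℝ) 1 := Ioo_subset_Ioo le_rfl ht.2
  have hres : volume.restrict (Ioo (0:ℝ) t) ≤ volume.restrict (Ioo (0:ℝ) 1) :=
    Measure.restrict_mono hsub le_rfl
  have hlg_anti : AntitoneOn (fun s => log (g s)) (Ioo (0:ℝ) 1) := fun s hs u hu hsu =>
    Real.log_le_log (hg_pos u hu) (hg_anti hs hu hsu)
  have hB : ∀ c : ℝ, ∫ s in Ioo (0:ℝ) t, max (log (g s) - c) 0
      ≤ ∫ s in Ioo (0:ℝ) t, max (log (f s) - c) 0 := fun c =>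
    lemmaB (fun s => log (g s)) (fun s => log (f s)) hlg_anti hg_int hf_int hmaj c t ht
  have e1 : ∫ s in Ioo (0:ℝ) t, log (1 + g s)
      = ∫ s in Ioo (0:ℝ) t, log (1 + Real.exp (log (g s))) :=
    setIntegral_congr_fun measurableSet_Ioo
      (fun s hs => by rw [Real.exp_log (hg_pos s (hsub hs))])
  have e2 : ∫ s in Ioo (0:ℝ) t, log (1 + f s)
      = ∫ s in Ioo (0:ℝ) t, log (1 + Real.exp (log (f s))) :=
    setIntegral_congr_fun measurableSet_Ioo
      (fun s hs => by rw [Real.exp_log (hf_pos s (hsub hs))])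
  rw [e1, e2]
  exact keyineq (fun s => log (g s)) (fun s => log (f s)) t ht
    (hg_int.aestronglyMeasurable.mono_measure hres)
    (hf_int.aestronglyMeasurable.mono_measure hres)
    (hg_int.mono_set hsub) (hf_int.mono_set hsub) hB
end

section
/- Let f, g : (0,1) → ℝ be nonincreasing, bounded functions with f(s) > 0 and g(s) > 0 for all s ∈ (0,1), such that log∘f and log∘g are Lebesgue integrable on (0,1), and suppose g is logarithmically submajorized by f, i.e., ∫₀ᵗ log(g(s)) ds ≤ ∫₀ᵗ log(f(s)) ds for all t ∈ (0,1]. Then ∫₀¹ log(1+g(s)²) ds ≤ ∫₀¹ log(1+f(s)²) ds. -/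
open MeasureTheory Real Set


lemma phi_hasDeriv (x : ℝ) : HasDerivAt (fun x => Real.log (1 + Real.exp x))
    (Real.exp x / (1 + Real.exp x)) x := by
  have h : HasDerivAt (fun x => 1 + Real.exp x) (Real.exp x) x :=
    (Real.hasDerivAt_exp x).const_add 1
  exact h.log (by positivity)

lemma phi'_mono : Monotone (fun x => Real.exp x / (1 + Real.exp x)) := by
  intro u v huv
  rw [div_le_div_iff₀ (by positivity) (by positivity)]
  nlinarith [Real.exp_le_exp.2 huv, Real.exp_pos u, Real.exp_pos v]

lemma phi_tangent (u v : ℝ) :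
    Real.log (1 + Real.exp u) - Real.log (1 + Real.exp v)
      ≤ (Real.exp u / (1 + Real.exp u)) * (u - v) := by
  set c := Real.exp u / (1 + Real.exp u) with hc
  set ψ : ℝ → ℝ := fun x => Real.log (1 + Real.exp x) - c * x with hψ
  have hd : ∀ x, HasDerivAt ψ (Real.exp x / (1 + Real.exp x) - c) x := by
    intro x
    have h2 : HasDerivAt (fun x : ℝ => c * x) (c * 1) x := (hasDerivAt_id x).const_mul c
    have := (phi_hasDeriv x).sub h2; simp only [mul_one] at this; exact this
  have hderiv : ∀ x, deriv ψ x = Real.exp x / (1 + Real.exp x) - c := fun x => (hd x).deriv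
  have key : ψ u ≤ ψ v := by
    rcases le_total u v with h | h
    · have mono : MonotoneOn ψ (Ici u) := by
        apply monotoneOn_of_deriv_nonneg (convex_Ici u)
        · exact fun x _ => ((hd x).differentiableAt).continuousAt.continuousWithinAt
        · exact fun x _ => ((hd x).differentiableAt).differentiableWithinAt
        · intro x hx
          rw [hderiv]
          have : u ≤ x := le_of_lt (by simpa using hx)
          simpa [sub_nonneg, hc] using phi'_mono this
      exact mono self_mem_Ici h h
    · have anti : AntitoneOn ψ (Iic u) := by
        apply antitoneOn_of_deriv_nonpos (convex_Iic u)
        · exact fun x _ => ((hd x).differentiableAt).continuousAt.continuousWithinAt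
        · exact fun x _ => ((hd x).differentiableAt).differentiableWithinAt
        · intro x hx
          rw [hderiv]
          have : x ≤ u := le_of_lt (by simpa using hx)
          simpa [sub_nonpos, hc] using phi'_mono this
      exact anti h self_mem_Iic h
  simp only [hψ] at key
  nlinarith [key]


lemma abel_key (w h : ℝ → ℝ)
    (hw_anti : AntitoneOn w (Ioo (0:ℝ) 1))
    (hw_pos : ∀ s ∈ Ioo (0:ℝ) 1, 0 < w s)
    (hw_le : ∀ s ∈ Ioo (0:ℝ) 1, w s ≤ 2)
    (hw_meas : AEStronglyMeasurable w (volume.restrict (Ioo (0:ℝ) 1)))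
    (hh : IntegrableOn h (Ioo (0:ℝ) 1))
    (hmaj : ∀ t ∈ Ioc (0:ℝ) 1, ∫ s in Ioo (0:ℝ) t, h s ≤ 0) :
    ∫ s in Ioo (0:ℝ) 1, w s * h s ≤ 0 := by
  set μ := volume.restrict (Ioo (0:ℝ) 1) with hμ
  set ν := volume.restrict (Ioc (0:ℝ) 2) with hν
  obtain ⟨w', w'sm, hw'⟩ := hw_meas
  have hhsm := hh.1
  obtain ⟨h', h'sm, hh'⟩ := hhsm
  have w'meas : Measurable w' := w'sm.measurable
  have h'meas : Measurable h' := h'sm.measurable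
  have h'int : Integrable h' μ := hh.congr hh'
  set F : ℝ × ℝ → ℝ := fun p => if p.2 < w' p.1 then h' p.1 else 0 with hF
  have condmeas : MeasurableSet {p : ℝ × ℝ | p.2 < w' p.1} :=
    measurableSet_lt measurable_snd (w'meas.comp measurable_fst)
  have Fmeas : Measurable F :=
    Measurable.ite condmeas (h'meas.comp measurable_fst) measurable_const
  have Fsect : ∀ s : ℝ, (fun l => F (s, l)) = (Iio (w' s)).indicator (fun _ => h' s) := by
    intro s
    ext l
    simp [hF, Set.indicator_apply, Set.mem_Iio]
  have Fsect_int : ∀ s : ℝ, Integrable (fun l => F (s, l)) ν := by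
    intro s
    rw [Fsect s]
    exact (integrable_const _).indicator measurableSet_Iio
  have νuniv : (ν Set.univ).toReal = 2 := by
    simp [hν, Real.volume_Ioc]
  have hF_int : Integrable (Function.uncurry fun s l => F (s, l)) (μ.prod ν) := by
    rw [show (Function.uncurry fun s l => F (s, l)) = F from rfl]
    rw [integrable_prod_iff Fmeas.aestronglyMeasurable]
    constructor
    · exact ae_of_all _ fun s => Fsect_int s
    · apply Integrable.mono' (h'int.norm.const_mul 2)
        ((Fmeas.stronglyMeasurable.norm.integral_prod_right').aestronglyMeasurable)
      apply ae_of_all _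
      intro s
      have h1 : ∀ l : ℝ, ‖F (s, l)‖ ≤ ‖h' s‖ := by
        intro l
        simp only [hF]
        split <;> simp [abs_nonneg]
      have h2 : ∫ l, ‖F (s, l)‖ ∂ν ≤ ∫ _l, ‖h' s‖ ∂ν :=
        integral_mono (Fsect_int s).norm (integrable_const _) h1
      rw [integral_const, smul_eq_mul, measureReal_def, νuniv] at h2
      have h3 : (0:ℝ) ≤ ∫ l, ‖F (s, l)‖ ∂ν := integral_nonneg fun l => norm_nonneg _
      rw [Real.norm_of_nonneg h3]
      linarith [h2]
  -- a.e. facts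
  have haein : ∀ᵐ s ∂μ, s ∈ Ioo (0:ℝ) 1 := ae_restrict_mem measurableSet_Ioo
  have haew : ∀ᵐ s ∂μ, w s = w' s := hw'
  have haeh : ∀ᵐ s ∂μ, h s = h' s := hh'
  -- Step A: ∫ w h = ∫ (fun s => ∫ l, F (s,l) dν)
  have stepA : ∫ s, w s * h s ∂μ = ∫ s, (∫ l, F (s, l) ∂ν) ∂μ := by
    apply integral_congr_ae
    filter_upwards [haein, haew, haeh] with s hs hws hhs
    rw [Fsect s, integral_indicator_const _ measurableSet_Iio]
    have hset : Iio (w' s) ∩ Ioc (0:ℝ) 2 = Ioo 0 (w' s) := by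
      have h1 : 0 < w' s := hws ▸ hw_pos s hs
      have h2 : w' s ≤ 2 := hws ▸ hw_le s hs
      ext x
      simp only [Set.mem_inter_iff, Set.mem_Iio, Set.mem_Ioc, Set.mem_Ioo]
      constructor
      · rintro ⟨hx1, hx2, _⟩; exact ⟨hx2, hx1⟩
      · rintro ⟨hx1, hx2⟩; exact ⟨hx2, hx1, hx2.le.trans h2⟩
    rw [hν, measureReal_def, Measure.restrict_apply measurableSet_Iio, hset, Real.volume_Ioo,
      ENNReal.toReal_ofReal (by simp; exact (hws ▸ hw_pos s hs).le)]
    rw [← hws, ← hhs]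
    simp [smul_eq_mul, mul_comm]
  -- Step B : swap
  have stepB : ∫ s, (∫ l, F (s, l) ∂ν) ∂μ = ∫ l, (∫ s, F (s, l) ∂μ) ∂ν := by
    exact integral_integral_swap hF_int
  -- Step C : each slice nonpositive
  have stepC : ∀ l : ℝ, (∫ s, F (s, l) ∂μ) ≤ 0 := by
    intro l
    set E : Set ℝ := {s | s ∈ Ioo (0:ℝ) 1 ∧ l < w s} with hE
    rcases eq_empty_or_nonempty E with hEe | hEne
    · have : ∀ᵐ s ∂μ, F (s, l) = 0 := by
        filter_upwards [haein, haew, haeh] with s hs hws hhs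
        have : ¬ l < w s := fun hc => (Set.eq_empty_iff_forall_notMem.1 hEe s) ⟨hs, hc⟩
        simp [hF, ← hws, this]
      rw [integral_congr_ae this, integral_zero]
    · have hbdd : BddAbove E := ⟨1, fun s hs => hs.1.2.le⟩
      set t := sSup E with ht
      have htle : t ≤ 1 := csSup_le hEne fun s hs => hs.1.2.le
      obtain ⟨s₀, hs₀⟩ := id hEne
      have htpos : 0 < t := lt_of_lt_of_le hs₀.1.1 (le_csSup hbdd hs₀)
      have hsub1 : Ioo (0:ℝ) t ⊆ E := by
        intro s hs
        obtain ⟨s', hs', hss'⟩ := exists_lt_of_lt_csSup hEne hs.2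
        have hsIoo : s ∈ Ioo (0:ℝ) 1 := ⟨hs.1, lt_trans hss' hs'.1.2⟩
        exact ⟨hsIoo, lt_of_lt_of_le hs'.2 (hw_anti hsIoo hs'.1 hss'.le)⟩
      have hsub2 : E ⊆ Ioc (0:ℝ) t := fun s hs => ⟨hs.1.1, le_csSup hbdd hs⟩
      have haet : ∀ᵐ s ∂μ, s ≠ t := by
        refine ae_iff.2 ?_
        have hset : {s : ℝ | ¬ s ≠ t} = {t} := by ext x; simp
        rw [hset, hμ, Measure.restrict_apply (measurableSet_singleton t)]
        exact measure_mono_null Set.inter_subset_left (volume_singleton)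
      have haeeq : ∀ᵐ s ∂μ, F (s, l) = (Ioo (0:ℝ) t).indicator h s := by
        filter_upwards [haein, haew, haeh, haet] with s hs hws hhs hst
        by_cases hmem : s ∈ Ioo (0:ℝ) t
        · have : l < w s := (hsub1 hmem).2
          simp [hF, ← hws, ← hhs, this, Set.indicator_of_mem hmem]
        · have : ¬ l < w s := by
            intro hc
            have : s ∈ E := ⟨hs, hc⟩
            have := hsub2 this
            exact hmem ⟨this.1, lt_of_le_of_ne this.2 hst⟩
          simp [hF, ← hws, this, Set.indicator_of_notMem hmem]
      rw [integral_congr_ae haeeq, integral_indicator measurableSet_Ioo]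
      rw [hμ, Measure.restrict_restrict measurableSet_Ioo,
        Set.inter_eq_self_of_subset_left (Ioo_subset_Ioo le_rfl htle)]
      exact hmaj t ⟨htpos, htle⟩
  calc ∫ s, w s * h s ∂μ = ∫ l, (∫ s, F (s, l) ∂μ) ∂ν := by rw [stepA, stepB]
    _ ≤ 0 := integral_nonpos_of_ae (ae_of_all _ stepC)

theorem log_submajorization_one_add_sq
    (f g : ℝ → ℝ)
    (hf_anti : AntitoneOn f (Ioo (0:ℝ) 1)) (hg_anti : AntitoneOn g (Ioo (0:ℝ) 1))
    (hf_bdd : ∃ C : ℝ, ∀ s ∈ Ioo (0:ℝ) 1, f s ≤ C)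
    (hg_bdd : ∃ C : ℝ, ∀ s ∈ Ioo (0:ℝ) 1, g s ≤ C)
    (hf_pos : ∀ s ∈ Ioo (0:ℝ) 1, 0 < f s) (hg_pos : ∀ s ∈ Ioo (0:ℝ) 1, 0 < g s)
    (hf_int : IntegrableOn (fun s => log (f s)) (Ioo (0:ℝ) 1))
    (hg_int : IntegrableOn (fun s => log (g s)) (Ioo (0:ℝ) 1))
    (hmaj : ∀ t ∈ Ioc (0:ℝ) 1,
        ∫ s in Ioo (0:ℝ) t, log (g s) ≤ ∫ s in Ioo (0:ℝ) t, log (f s)) :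
    ∫ s in Ioo (0:ℝ) 1, log (1 + g s ^ 2) ≤ ∫ s in Ioo (0:ℝ) 1, log (1 + f s ^ 2) := by
  set μ := volume.restrict (Ioo (0:ℝ) 1) with hμ
  have haein : ∀ᵐ s ∂μ, s ∈ Ioo (0:ℝ) 1 := ae_restrict_mem measurableSet_Ioo
  set w : ℝ → ℝ := fun s => 2 * (g s) ^ 2 / (1 + (g s) ^ 2) with hw
  set h : ℝ → ℝ := fun s => log (g s) - log (f s) with hh
  -- measurability
  have hgAESM : AEStronglyMeasurable g μ := by
    refine (Real.continuous_exp.comp_aestronglyMeasurable hg_int.1).congr ?_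
    filter_upwards [haein] with s hs
    exact Real.exp_log (hg_pos s hs)
  have hfAESM : AEStronglyMeasurable f μ := by
    refine (Real.continuous_exp.comp_aestronglyMeasurable hf_int.1).congr ?_
    filter_upwards [haein] with s hs
    exact Real.exp_log (hf_pos s hs)
  have hcont : Continuous fun x : ℝ => 2 * x ^ 2 / (1 + x ^ 2) :=
    Continuous.div (by continuity) (by continuity) (fun x => by positivity)
  have hwAESM : AEStronglyMeasurable w μ := hcont.comp_aestronglyMeasurable hgAESM
  -- antitone, bounds for w
  have hw_anti : AntitoneOn w (Ioo (0:ℝ) 1) := by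
    intro s hs t ht hst
    have h1 : 0 < g t := hg_pos t ht
    have h2 : g t ≤ g s := hg_anti hs ht hst
    simp only [hw]
    rw [div_le_div_iff₀ (by positivity) (by positivity)]
    nlinarith [sq_nonneg (g s), sq_nonneg (g t), sq_nonneg (g s - g t), sq_nonneg (g s + g t)]
  have hw_pos : ∀ s ∈ Ioo (0:ℝ) 1, 0 < w s := fun s hs => by
    have := hg_pos s hs; simp only [hw]; positivity
  have hw_le : ∀ s ∈ Ioo (0:ℝ) 1, w s ≤ 2 := fun s hs => by
    simp only [hw]
    rw [div_le_iff₀ (by positivity)]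
    nlinarith [sq_nonneg (g s)]
  -- integrability of h
  have hh_int : IntegrableOn h (Ioo (0:ℝ) 1) := hg_int.sub hf_int
  -- pointwise tangent inequality
  have hpw : ∀ s ∈ Ioo (0:ℝ) 1, log (1 + g s ^ 2) - log (1 + f s ^ 2) ≤ w s * h s := by
    intro s hs
    have hu : Real.exp (2 * Real.log (g s)) = g s ^ 2 := by
      rw [two_mul, Real.exp_add, Real.exp_log (hg_pos s hs)]; ring
    have hv : Real.exp (2 * Real.log (f s)) = f s ^ 2 := by
      rw [two_mul, Real.exp_add, Real.exp_log (hf_pos s hs)]; ring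
    have key := phi_tangent (2 * Real.log (g s)) (2 * Real.log (f s))
    rw [hu, hv] at key
    have heq : g s ^ 2 / (1 + g s ^ 2) * (2 * Real.log (g s) - 2 * Real.log (f s))
        = w s * h s := by
      simp only [hw, hh]; ring
    rw [heq] at key
    exact key
  -- integrability of log (1 + f^2), log(1 + g^2)
  have hlogc : Continuous fun x : ℝ => Real.log (1 + x ^ 2) :=
    Continuous.log (continuous_const.add (continuous_pow 2)) (fun x => by positivity)
  have hIf : IntegrableOn (fun s => log (1 + f s ^ 2)) (Ioo (0:ℝ) 1) := by
    obtain ⟨C, hC⟩ := hf_bdd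
    refine Integrable.mono' (integrable_const (Real.log (1 + C ^ 2)))
      (hlogc.comp_aestronglyMeasurable hfAESM) ?_
    filter_upwards [haein] with s hs
    have h1 : 0 < f s := hf_pos s hs
    have h2 : f s ≤ C := hC s hs
    have h3 : (0:ℝ) ≤ log (1 + f s ^ 2) := Real.log_nonneg (by nlinarith)
    rw [Real.norm_of_nonneg h3]
    exact Real.log_le_log (by positivity) (by nlinarith)
  have hIg : IntegrableOn (fun s => log (1 + g s ^ 2)) (Ioo (0:ℝ) 1) := by
    obtain ⟨C, hC⟩ := hg_bdd
    refine Integrable.mono' (integrable_const (Real.log (1 + C ^ 2)))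
      (hlogc.comp_aestronglyMeasurable hgAESM) ?_
    filter_upwards [haein] with s hs
    have h1 : 0 < g s := hg_pos s hs
    have h2 : g s ≤ C := hC s hs
    have h3 : (0:ℝ) ≤ log (1 + g s ^ 2) := Real.log_nonneg (by nlinarith)
    rw [Real.norm_of_nonneg h3]
    exact Real.log_le_log (by positivity) (by nlinarith)
  -- integrability of w * h
  have hIwh : Integrable (fun s => w s * h s) μ := by
    refine Integrable.mono' (hh_int.norm.const_mul 2)
      (hwAESM.mul hh_int.1) ?_
    filter_upwards [haein] with s hs
    rw [norm_mul, Real.norm_of_nonneg (le_of_lt (hw_pos s hs))]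
    exact mul_le_mul_of_nonneg_right (hw_le s hs) (norm_nonneg _)
  -- majorization for h
  have hmaj' : ∀ t ∈ Ioc (0:ℝ) 1, ∫ s in Ioo (0:ℝ) t, h s ≤ 0 := by
    intro t ht
    have h1 : Ioo (0:ℝ) t ⊆ Ioo (0:ℝ) 1 := Ioo_subset_Ioo le_rfl ht.2
    simp only [hh]
    rw [integral_sub (hg_int.mono_set h1) (hf_int.mono_set h1)]
    linarith [hmaj t ht]
  have habel := abel_key w h hw_anti hw_pos hw_le hwAESM hh_int hmaj'
  have hmono : ∫ s, (log (1 + g s ^ 2) - log (1 + f s ^ 2)) ∂μ ≤ ∫ s, w s * h s ∂μ :=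
    integral_mono_ae (hIg.sub hIf) hIwh
      (by filter_upwards [haein] with s hs using hpw s hs)
  rw [integral_sub hIg hIf] at hmono
  linarith [habel, hmono]
end

section
/- Let f, g : (0,1) → ℝ be nonincreasing, bounded functions with f(s) > 0 and g(s) > 0 for all s ∈ (0,1), such that log∘f and log∘g are Lebesgue integrable on (0,1), and suppose g is logarithmically submajorized by f, i.e., ∫₀ᵗ log(g(s)) ds ≤ ∫₀ᵗ log(f(s)) ds for all t ∈ (0,1]. Let Φ : [0,∞) → ℝ be a nondecreasing function, continuous at 0, such that the function x ↦ Φ(exp(x)) is convex on ℝ. Then ∫₀¹ Φ(g(s)) ds ≤ ∫₀¹ Φ(f(s)) ds. -/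
open MeasureTheory Real Set


noncomputable def Ksub (φ : ℝ → ℝ) (x : ℝ) : ℝ :=
  sInf ((fun y => (φ y - φ x) / (y - x)) '' Ioi x)

lemma slope_nonneg' {φ : ℝ → ℝ} (hm : Monotone φ) {x y : ℝ} (h : x < y) :
    0 ≤ (φ y - φ x) / (y - x) :=
  div_nonneg (sub_nonneg.2 (hm h.le)) (sub_nonneg.2 h.le)

lemma Ksub_le {φ : ℝ → ℝ} (hm : Monotone φ) {x y : ℝ} (h : x < y) :
    Ksub φ x ≤ (φ y - φ x) / (y - x) :=
  csInf_le ⟨0, by rintro b ⟨z, hz, rfl⟩; exact slope_nonneg' hm hz⟩ ⟨y, h, rfl⟩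

lemma Ksub_nonneg {φ : ℝ → ℝ} (hm : Monotone φ) (x : ℝ) : 0 ≤ Ksub φ x :=
  le_csInf ⟨_, ⟨x + 1, lt_add_one x, rfl⟩⟩
    (by rintro b ⟨z, hz, rfl⟩; exact slope_nonneg' hm hz)

lemma le_Ksub {φ : ℝ → ℝ} (hc : ConvexOn ℝ univ φ) {x y : ℝ} (h : y < x) :
    (φ y - φ x) / (y - x) ≤ Ksub φ x :=
  le_csInf ⟨_, ⟨x + 1, lt_add_one x, rfl⟩⟩ (by
    rintro b ⟨z, hz, rfl⟩
    exact hc.secant_mono (mem_univ x) (mem_univ y) (mem_univ z) h.ne (ne_of_gt hz)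
      (h.le.trans (le_of_lt hz)))

lemma Ksub_subgrad {φ : ℝ → ℝ} (hc : ConvexOn ℝ univ φ) (hm : Monotone φ) (x y : ℝ) :
    φ x + Ksub φ x * (y - x) ≤ φ y := by
  rcases lt_trichotomy x y with h | rfl | h
  · have h1 := Ksub_le hm h
    have h2 : 0 < y - x := sub_pos.2 h
    have := (le_div_iff₀ h2).1 h1
    linarith
  · simp
  · have h1 := le_Ksub hc h
    have h2 : y - x < 0 := sub_neg.2 h
    have h3 := mul_le_mul_of_nonpos_right h1 h2.le
    rw [div_mul_cancel₀ _ h2.ne] at h3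
    linarith

lemma Ksub_mono {φ : ℝ → ℝ} (hc : ConvexOn ℝ univ φ) (hm : Monotone φ) :
    Monotone (Ksub φ) := by
  intro x₁ x₂ h
  rcases eq_or_lt_of_le h with rfl | h
  · exact le_rfl
  refine le_csInf ⟨_, ⟨x₂ + 1, mem_Ioi.mpr (lt_add_one _), rfl⟩⟩ ?_
  rintro b ⟨z, hz, rfl⟩
  have h1 : Ksub φ x₁ ≤ (φ z - φ x₁) / (z - x₁) := Ksub_le hm (h.trans hz)
  have h2 : (φ x₁ - φ z) / (x₁ - z) ≤ (φ x₂ - φ z) / (x₂ - z) :=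
    hc.secant_mono (mem_univ z) (mem_univ x₁) (mem_univ x₂) (ne_of_lt (h.trans hz))
      (ne_of_lt hz) h.le
  have e1 : (φ x₁ - φ z) / (x₁ - z) = (φ z - φ x₁) / (z - x₁) := by
    rw [← neg_sub (φ z) (φ x₁), ← neg_sub z x₁, neg_div_neg_eq]
  have e2 : (φ x₂ - φ z) / (x₂ - z) = (φ z - φ x₂) / (z - x₂) := by
    rw [← neg_sub (φ z) (φ x₂), ← neg_sub z x₂, neg_div_neg_eq]
  rw [e1] at h2
  rw [e2] at h2
  linarith

lemma key_abel {B : ℝ} (k w : ℝ → ℝ) (hk_anti : Antitone k)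
    (hk0 : ∀ s, 0 ≤ k s) (hkB : ∀ s, k s ≤ B)
    (hw_meas : Measurable w)
    (hw : IntegrableOn w (Ioo (0:ℝ) 1))
    (hmaj : ∀ t ∈ Ioc (0:ℝ) 1, ∫ s in Ioo (0:ℝ) t, w s ≤ 0) :
    ∫ s in Ioo (0:ℝ) 1, k s * w s ≤ 0 := by
  have hk_meas : Measurable k := hk_anti.measurable
  set F : ℝ → ℝ → ℝ := fun lam s => if lam < k s then w s else 0 with hF
  -- Step A : layer cake pointwise
  have stepA : ∀ s : ℝ, k s * w s = ∫ lam in Ioo (0:ℝ) B, F lam s := by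
    intro s
    have h1 : ∫ lam in Ioo (0:ℝ) B, F lam s
        = ∫ lam in Ioo (0:ℝ) B, (Iio (k s)).indicator (fun _ => w s) lam := by
      refine setIntegral_congr_fun measurableSet_Ioo fun lam _ => ?_
      by_cases h : lam < k s <;> simp [hF, Set.indicator, h]
    have h2 : Ioo (0:ℝ) B ∩ Iio (k s) = Ioo 0 (k s) := by
      ext lam
      simp only [mem_inter_iff, mem_Ioo, mem_Iio]
      constructor
      · rintro ⟨⟨h0, _⟩, h2⟩; exact ⟨h0, h2⟩
      · rintro ⟨h0, h2⟩; exact ⟨⟨h0, lt_of_lt_of_le h2 (hkB s)⟩, h2⟩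
    rw [h1, setIntegral_indicator measurableSet_Iio, h2, setIntegral_const,
      Real.volume_real_Ioo_of_le (hk0 s), sub_zero, smul_eq_mul]
  -- Step B : integrability on the product
  have hμB : volume (Ioo (0:ℝ) B) ≠ ⊤ := by
    rw [Real.volume_Ioo]; exact ENNReal.ofReal_ne_top
  have hG : Integrable (fun p : ℝ × ℝ => w p.2)
      ((volume.restrict (Ioo (0:ℝ) B)).prod (volume.restrict (Ioo (0:ℝ) 1))) := by
    have hmap : Measure.map Prod.snd
        ((volume.restrict (Ioo (0:ℝ) B)).prod (volume.restrict (Ioo (0:ℝ) 1)))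
        = ((volume.restrict (Ioo (0:ℝ) B)) univ) • (volume.restrict (Ioo (0:ℝ) 1)) :=
      Measure.map_snd_prod
    have h1 : Integrable w (((volume.restrict (Ioo (0:ℝ) B)) univ)
        • (volume.restrict (Ioo (0:ℝ) 1))) := by
      refine hw.smul_measure ?_
      rw [Measure.restrict_apply_univ]; exact hμB
    have h2 : Integrable w (Measure.map Prod.snd
        ((volume.restrict (Ioo (0:ℝ) B)).prod (volume.restrict (Ioo (0:ℝ) 1)))) := by
      rw [hmap]; exact h1
    exact (integrable_map_measure hw_meas.stronglyMeasurable.aestronglyMeasurable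
      measurable_snd.aemeasurable).symm.2 h2
  have hF_meas : Measurable (Function.uncurry F) := by
    have : Measurable fun p : ℝ × ℝ => if p.1 < k p.2 then w p.2 else 0 :=
      Measurable.ite (measurableSet_lt measurable_fst (hk_meas.comp measurable_snd))
        (hw_meas.comp measurable_snd) measurable_const
    exact this
  have hF_int : Integrable (Function.uncurry F)
      ((volume.restrict (Ioo (0:ℝ) B)).prod (volume.restrict (Ioo (0:ℝ) 1))) := by
    refine hG.mono hF_meas.stronglyMeasurable.aestronglyMeasurable (ae_of_all _ ?_)
    intro p
    by_cases h : p.1 < k p.2 <;> simp [Function.uncurry, hF, h, abs_nonneg]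
  -- Step C : inner integral is nonpositive
  have inner_le : ∀ lam : ℝ, (∫ s in Ioo (0:ℝ) 1, F lam s) ≤ 0 := by
    intro lam
    have hT : MeasurableSet {s : ℝ | lam < k s} := measurableSet_lt measurable_const hk_meas
    have h1 : ∫ s in Ioo (0:ℝ) 1, F lam s
        = ∫ s in Ioo (0:ℝ) 1 ∩ {s : ℝ | lam < k s}, w s := by
      rw [← setIntegral_indicator hT]
      refine setIntegral_congr_fun measurableSet_Ioo fun s _ => ?_
      by_cases h : lam < k s <;> simp [hF, Set.indicator, h]
    rw [h1]
    set S := Ioo (0:ℝ) 1 ∩ {s : ℝ | lam < k s} with hSdef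
    by_cases hne : S.Nonempty
    · have hbdd : BddAbove S := ⟨1, fun x hx => hx.1.2.le⟩
      set a := sSup S with ha
      obtain ⟨x₀, hx₀⟩ := hne
      have ha_pos : 0 < a := lt_of_lt_of_le hx₀.1.1 (le_csSup hbdd hx₀)
      have ha_le : a ≤ 1 := csSup_le ⟨x₀, hx₀⟩ fun x hx => hx.1.2.le
      have hsub1 : Ioo (0:ℝ) a ⊆ S := by
        intro s hs
        obtain ⟨x, hxS, hsx⟩ := exists_lt_of_lt_csSup ⟨x₀, hx₀⟩ hs.2
        exact ⟨⟨hs.1, lt_of_lt_of_le hs.2 ha_le⟩, lt_of_lt_of_le hxS.2 (hk_anti hsx.le)⟩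
      have hsub2 : S ⊆ Ioc 0 a := fun x hx => ⟨hx.1.1, le_csSup hbdd hx⟩
      have haeeq : S =ᵐ[volume] Ioo (0:ℝ) a := by
        rw [MeasureTheory.ae_eq_set]
        constructor
        · refine measure_mono_null (fun x hx => ?_) (measure_singleton a)
          rcases hx with ⟨hxS, hxn⟩
          have h2 := hsub2 hxS
          have : x = a := by
            by_contra hxa
            exact hxn ⟨h2.1, lt_of_le_of_ne h2.2 hxa⟩
          exact this
        · have : Ioo (0:ℝ) a \ S = ∅ := diff_eq_empty.2 hsub1
          simp [this]
      calc ∫ s in S, w s = ∫ s in Ioo (0:ℝ) a, w s := setIntegral_congr_set haeeq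
        _ ≤ 0 := hmaj a ⟨ha_pos, ha_le⟩
    · rw [not_nonempty_iff_eq_empty] at hne
      simp [hne]
  -- assemble
  calc ∫ s in Ioo (0:ℝ) 1, k s * w s
      = ∫ s in Ioo (0:ℝ) 1, ∫ lam in Ioo (0:ℝ) B, F lam s := by
        exact integral_congr_ae (ae_of_all _ fun s => stepA s)
    _ = ∫ lam in Ioo (0:ℝ) B, ∫ s in Ioo (0:ℝ) 1, F lam s := (integral_integral_swap hF_int).symm
    _ ≤ 0 := setIntegral_nonpos measurableSet_Ioo fun lam _ => inner_le lam

lemma antitone_extend (f : ℝ → ℝ) (C : ℝ)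
    (hanti : AntitoneOn f (Ioo (0:ℝ) 1))
    (h0 : ∀ s ∈ Ioo (0:ℝ) 1, 0 ≤ f s) (hC : ∀ s ∈ Ioo (0:ℝ) 1, f s ≤ C) (hC0 : 0 ≤ C) :
    Antitone (fun s : ℝ => if s ≤ 0 then C else if s < 1 then f s else 0) := by
  intro s t hst
  by_cases hs0 : s ≤ 0
  · simp only [if_pos hs0]
    by_cases ht0 : t ≤ 0
    · simp [ht0]
    · simp only [if_neg ht0]
      push_neg at ht0
      by_cases ht1 : t < 1
      · simp only [if_pos ht1]; exact hC t ⟨ht0, ht1⟩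
      · simp only [if_neg ht1]; exact hC0
  · have hs0' : (0:ℝ) < s := not_le.1 hs0
    have ht0 : ¬ t ≤ 0 := not_le.2 (lt_of_lt_of_le hs0' hst)
    simp only [if_neg hs0, if_neg ht0]
    by_cases ht1 : t < 1
    · have hs1 : s < 1 := lt_of_le_of_lt hst ht1
      simp only [if_pos ht1, if_pos hs1]
      exact hanti ⟨hs0', hs1⟩ ⟨lt_of_lt_of_le hs0' hst, ht1⟩ hst
    · simp only [if_neg ht1]
      by_cases hs1 : s < 1
      · simp only [if_pos hs1]; exact h0 s ⟨hs0', hs1⟩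
      · simp [hs1]

lemma integrableOn_Phi_comp (Φ : ℝ → ℝ) (hΦ : MonotoneOn Φ (Ici (0:ℝ)))
    (f : ℝ → ℝ) (C : ℝ) (hC0 : 0 ≤ C)
    (hanti : AntitoneOn f (Ioo (0:ℝ) 1))
    (hpos : ∀ s ∈ Ioo (0:ℝ) 1, 0 < f s) (hbd : ∀ s ∈ Ioo (0:ℝ) 1, f s ≤ C) :
    IntegrableOn (fun s => Φ (f s)) (Ioo (0:ℝ) 1) := by
  set f' : ℝ → ℝ := fun s => if s ≤ 0 then C else if s < 1 then f s else 0 with hf'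
  have hf'_anti : Antitone f' :=
    antitone_extend f C hanti (fun s hs => (hpos s hs).le) hbd hC0
  have hf'_meas : Measurable f' := hf'_anti.measurable
  set Φ' : ℝ → ℝ := fun x => Φ (max x 0) with hΦ'
  have hΦ'_mono : Monotone Φ' := fun x y h =>
    hΦ (mem_Ici.2 (le_max_right _ _)) (mem_Ici.2 (le_max_right _ _)) (max_le_max h le_rfl)
  have hmeas : Measurable fun s => Φ' (f' s) := hΦ'_mono.measurable.comp hf'_meas
  have heq : EqOn (fun s => Φ (f s)) (fun s => Φ' (f' s)) (Ioo (0:ℝ) 1) := by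
    intro s hs
    have h1 : f' s = f s := by
      simp only [hf', if_neg (not_le.2 hs.1), if_pos hs.2]
    simp only [hΦ', h1, max_eq_left (hpos s hs).le]
  have hint' : IntegrableOn (fun s => Φ' (f' s)) (Ioo (0:ℝ) 1) := by
    refine Measure.integrableOn_of_bounded (M := max |Φ C| |Φ 0|) ?_
      hmeas.stronglyMeasurable.aestronglyMeasurable ?_
    · rw [Real.volume_Ioo]; exact ENNReal.ofReal_ne_top
    · refine (ae_restrict_iff' measurableSet_Ioo).2 (ae_of_all _ fun s hs => ?_)
      have heqs : Φ' (f' s) = Φ (f s) := (heq hs).symm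
      rw [heqs]
      have h1 : Φ (f s) ≤ Φ C := hΦ (hpos s hs).le hC0 (hbd s hs)
      have h2 : Φ 0 ≤ Φ (f s) := hΦ (mem_Ici.2 le_rfl) (hpos s hs).le (hpos s hs).le
      rw [Real.norm_eq_abs, abs_le]
      constructor
      · have := neg_abs_le (Φ 0); have := le_max_right |Φ C| |Φ 0|; linarith
      · have := le_abs_self (Φ C); have := le_max_left |Φ C| |Φ 0|; linarith
  exact hint'.congr ((ae_restrict_iff' measurableSet_Ioo).2
    (ae_of_all _ fun s hs => (heq hs).symm))

theorem log_submajorization_Phi_integral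
    (f g : ℝ → ℝ)
    (hf_anti : AntitoneOn f (Ioo (0:ℝ) 1)) (hg_anti : AntitoneOn g (Ioo (0:ℝ) 1))
    (hf_bdd : ∃ C : ℝ, ∀ s ∈ Ioo (0:ℝ) 1, f s ≤ C)
    (hg_bdd : ∃ C : ℝ, ∀ s ∈ Ioo (0:ℝ) 1, g s ≤ C)
    (hf_pos : ∀ s ∈ Ioo (0:ℝ) 1, 0 < f s) (hg_pos : ∀ s ∈ Ioo (0:ℝ) 1, 0 < g s)
    (hf_int : IntegrableOn (fun s => log (f s)) (Ioo (0:ℝ) 1))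
    (hg_int : IntegrableOn (fun s => log (g s)) (Ioo (0:ℝ) 1))
    (hmaj : ∀ t ∈ Ioc (0:ℝ) 1,
        ∫ s in Ioo (0:ℝ) t, log (g s) ≤ ∫ s in Ioo (0:ℝ) t, log (f s))
    (Φ : ℝ → ℝ) (hΦ_mono : MonotoneOn Φ (Ici (0:ℝ)))
    (hΦ_cont : ContinuousWithinAt Φ (Ici (0:ℝ)) 0)
    (hΦ_conv : ConvexOn ℝ univ (fun x : ℝ => Φ (exp x))) :
    ∫ s in Ioo (0:ℝ) 1, Φ (g s) ≤ ∫ s in Ioo (0:ℝ) 1, Φ (f s) := by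
  obtain ⟨Cf, hCf⟩ := hf_bdd
  obtain ⟨Cg, hCg⟩ := hg_bdd
  set C : ℝ := max (max Cf Cg) 1 with hCdef
  have hC1 : (1:ℝ) ≤ C := le_max_right _ _
  have hC0 : (0:ℝ) < C := lt_of_lt_of_le one_pos hC1
  have hfC : ∀ s ∈ Ioo (0:ℝ) 1, f s ≤ C := fun s hs =>
    (hCf s hs).trans ((le_max_left Cf Cg).trans (le_max_left _ _))
  have hgC : ∀ s ∈ Ioo (0:ℝ) 1, g s ≤ C := fun s hs =>
    (hCg s hs).trans ((le_max_right Cf Cg).trans (le_max_left _ _))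
  set φ : ℝ → ℝ := fun x => Φ (exp x) with hφdef
  have hφc : ConvexOn ℝ univ φ := hΦ_conv
  have hφm : Monotone φ := fun x y hxy =>
    hΦ_mono (exp_pos x).le (exp_pos y).le (exp_le_exp.2 hxy)
  set B : ℝ := Ksub φ (Real.log C) with hBdef
  have hB0 : 0 ≤ B := Ksub_nonneg hφm _
  -- the antitone weight function
  set k : ℝ → ℝ := fun s => if s ≤ 0 then B else
    if s < 1 then Ksub φ (Real.log (g s)) else 0 with hkdef
  have hKg_le : ∀ s ∈ Ioo (0:ℝ) 1, Ksub φ (Real.log (g s)) ≤ B := by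
    intro s hs
    exact Ksub_mono hφc hφm (Real.log_le_log (hg_pos s hs) (hgC s hs))
  have hKg_anti : AntitoneOn (fun s => Ksub φ (Real.log (g s))) (Ioo (0:ℝ) 1) := by
    intro s hs t ht hst
    exact Ksub_mono hφc hφm (Real.log_le_log (hg_pos t ht) (hg_anti hs ht hst))
  have hk_anti : Antitone k :=
    antitone_extend _ B hKg_anti (fun s _ => Ksub_nonneg hφm _) hKg_le hB0
  have hk0 : ∀ s, 0 ≤ k s := by
    intro s
    simp only [hkdef]
    split_ifs with h1 h2
    · exact hB0
    · exact Ksub_nonneg hφm _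
    · exact le_rfl
  have hkB : ∀ s, k s ≤ B := by
    intro s
    simp only [hkdef]
    split_ifs with h1 h2
    · exact le_rfl
    · exact hKg_le s ⟨not_le.1 h1, h2⟩
    · exact hB0
  have hkIoo : ∀ s ∈ Ioo (0:ℝ) 1, k s = Ksub φ (Real.log (g s)) := by
    intro s hs
    simp only [hkdef, if_neg (not_le.2 hs.1), if_pos hs.2]
  -- integrability
  have hint_f : IntegrableOn (fun s => Φ (f s)) (Ioo (0:ℝ) 1) :=
    integrableOn_Phi_comp Φ hΦ_mono f C hC0.le hf_anti hf_pos hfC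
  have hint_g : IntegrableOn (fun s => Φ (g s)) (Ioo (0:ℝ) 1) :=
    integrableOn_Phi_comp Φ hΦ_mono g C hC0.le hg_anti hg_pos hgC
  set w : ℝ → ℝ := fun s => Real.log (g s) - Real.log (f s) with hwdef
  have hw_int : IntegrableOn w (Ioo (0:ℝ) 1) := hg_int.sub hf_int
  have hkw_int : IntegrableOn (fun s => k s * w s) (Ioo (0:ℝ) 1) := by
    refine hw_int.bdd_mul hk_anti.measurable.stronglyMeasurable.aestronglyMeasurable (c := B) (ae_of_all _ ?_)
    intro s
    rw [Real.norm_eq_abs, abs_of_nonneg (hk0 s)]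
    exact hkB s
  -- pointwise subgradient inequality
  have hpt : ∀ s ∈ Ioo (0:ℝ) 1, Φ (g s) ≤ Φ (f s) + k s * w s := by
    intro s hs
    have h1 := Ksub_subgrad hφc hφm (Real.log (g s)) (Real.log (f s))
    have hg' : φ (Real.log (g s)) = Φ (g s) := by
      simp only [hφdef, Real.exp_log (hg_pos s hs)]
    have hf' : φ (Real.log (f s)) = Φ (f s) := by
      simp only [hφdef, Real.exp_log (hf_pos s hs)]
    rw [hg', hf'] at h1
    rw [hkIoo s hs]
    simp only [hwdef]
    nlinarith [h1]
  -- the Abel-type bound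
  obtain hsm := hw_int.1
  set w' : ℝ → ℝ := hsm.mk w with hw'def
  have hw'_meas : Measurable w' := hsm.stronglyMeasurable_mk.measurable
  have hww' : w =ᵐ[volume.restrict (Ioo (0:ℝ) 1)] w' := hsm.ae_eq_mk
  have hw'_int : IntegrableOn w' (Ioo (0:ℝ) 1) := hw_int.congr hww'
  have hmaj' : ∀ t ∈ Ioc (0:ℝ) 1, ∫ s in Ioo (0:ℝ) t, w' s ≤ 0 := by
    intro t ht
    have hsub : Ioo (0:ℝ) t ⊆ Ioo (0:ℝ) 1 := Ioo_subset_Ioo le_rfl ht.2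
    have haet : w =ᵐ[volume.restrict (Ioo (0:ℝ) t)] w' :=
      ae_restrict_of_ae_restrict_of_subset hsub hww'
    have heq2 : ∫ s in Ioo (0:ℝ) t, w' s = ∫ s in Ioo (0:ℝ) t, w s :=
      integral_congr_ae haet.symm
    rw [heq2]
    have h1 : ∫ s in Ioo (0:ℝ) t, w s
        = (∫ s in Ioo (0:ℝ) t, Real.log (g s)) - ∫ s in Ioo (0:ℝ) t, Real.log (f s) :=
      integral_sub (hg_int.mono_set hsub) (hf_int.mono_set hsub)
    rw [h1, sub_nonpos]
    exact hmaj t ht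
  have habel : ∫ s in Ioo (0:ℝ) 1, k s * w' s ≤ 0 :=
    key_abel k w' hk_anti hk0 hkB hw'_meas hw'_int hmaj'
  have hkw_eq : ∫ s in Ioo (0:ℝ) 1, k s * w s = ∫ s in Ioo (0:ℝ) 1, k s * w' s :=
    integral_congr_ae (Filter.EventuallyEq.mul (Filter.EventuallyEq.refl _ k) hww')
  -- assemble
  have step1 : ∫ s in Ioo (0:ℝ) 1, Φ (g s)
      ≤ ∫ s in Ioo (0:ℝ) 1, (Φ (f s) + k s * w s) :=
    setIntegral_mono_on hint_g (hint_f.add hkw_int) measurableSet_Ioo hpt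
  rw [integral_add hint_f hkw_int] at step1
  have step2 : ∫ s in Ioo (0:ℝ) 1, k s * w s ≤ 0 := by rw [hkw_eq]; exact habel
  linarith
end

section
/- Let n ≥ 1, let T ∈ M_n(ℂ), and let P ∈ M_n(ℂ) be an orthogonal projection matrix (P = Pᴴ = P²) such that T P = P T P. Set S = T P + (1 − P) T. Then the matrices I + Sᴴ S and I + Tᴴ T are positive definite Hermitian, their determinants are positive real numbers, and det(I + Sᴴ S) ≤ det(I + Tᴴ T). -/
open Matrix
open scoped ComplexOrder

section AuxDet

lemma det_one_add_of_sq_zero {n : ℕ} {N : Matrix (Fin n) (Fin n) ℂ}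
    (h : N * N = 0) : (1 + N).det = 1 := by
  have hnil : IsNilpotent N := ⟨2, by rw [pow_two, h]⟩
  obtain ⟨c, -, hc⟩ := Polynomial.isUnit_iff.mp (Matrix.isUnit_charpolyRev_of_isNilpotent hnil)
  have h0 : c = 1 := by
    have := Matrix.eval_charpolyRev (M := N)
    rw [← hc] at this
    simpa using this
  have h1 : Polynomial.eval (-1 : ℂ) N.charpolyRev = 1 := by rw [← hc, h0]; simp
  rw [Matrix.charpolyRev] at h1
  rw [← h1, ← Polynomial.coe_evalRingHom, RingHom.map_det]
  congr 1
  ext i j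
  rcases eq_or_ne i j with rfl | hij
  · simp [Matrix.map_apply, Matrix.one_apply, Matrix.smul_apply, sub_eq_add_neg]
  · simp [Matrix.map_apply, Matrix.one_apply, Matrix.smul_apply, hij, sub_eq_add_neg]

lemma det_one_add_posSemidef {n : ℕ} {F : Matrix (Fin n) (Fin n) ℂ} (hF : F.PosSemidef) :
    ∃ h : ℝ, 1 ≤ h ∧ (1 + F).det = (h : ℂ) := by
  have hH := hF.1
  set U : Matrix (Fin n) (Fin n) ℂ := hH.eigenvectorUnitary.1 with hUdef
  have hU : U * star U = 1 := Matrix.mem_unitaryGroup_iff.mp hH.eigenvectorUnitary.2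
  have key : 1 + F = U * (1 + diagonal (RCLike.ofReal ∘ hH.eigenvalues)) * star U := by
    conv_lhs => rw [hH.spectral_theorem, Unitary.conjStarAlgAut_apply]
    rw [mul_add, add_mul, mul_one, hU]
  refine ⟨∏ i, (1 + hH.eigenvalues i), ?_, ?_⟩
  · calc (1:ℝ) = ∏ _i : Fin n, 1 := by simp
      _ ≤ ∏ i, (1 + hH.eigenvalues i) :=
        Finset.prod_le_prod (fun i _ => zero_le_one)
          (fun i _ => by linarith [hF.eigenvalues_nonneg i])
  · rw [key, det_mul, det_mul, mul_comm U.det, mul_assoc, ← det_mul, hU, det_one, mul_one,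
      ← diagonal_one, diagonal_add, det_diagonal]
    push_cast
    exact Finset.prod_congr rfl fun i _ => by simp [Pi.add_apply, Function.comp_apply]

lemma posDef_det_real {n : ℕ} {M : Matrix (Fin n) (Fin n) ℂ} (hM : M.PosDef) :
    ∃ a : ℝ, 0 < a ∧ M.det = (a : ℂ) := by
  have h := hM.det_pos
  obtain ⟨h1, h2⟩ := Complex.lt_def.mp h
  refine ⟨M.det.re, by simpa using h1, ?_⟩
  apply Complex.ext
  · simp
  · simp [← h2]

end AuxDet

set_option maxHeartbeats 1000000 in
theorem det_one_add_compression_le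
    (n : ℕ) (hn : 1 ≤ n) (T P : Matrix (Fin n) (Fin n) ℂ)
    (hP_herm : P = Pᴴ) (hP_idem : P * P = P)
    (hinv : T * P = P * (T * P)) :
    (1 + (T * P + (1 - P) * T)ᴴ * (T * P + (1 - P) * T)).PosDef ∧
    (1 + Tᴴ * T).PosDef ∧
    ∃ a b : ℝ, 0 < a ∧ 0 < b ∧
      (1 + (T * P + (1 - P) * T)ᴴ * (T * P + (1 - P) * T)).det = (a : ℂ) ∧
      (1 + Tᴴ * T).det = (b : ℂ) ∧ a ≤ b := by
  classical
  set Q : Matrix (Fin n) (Fin n) ℂ := 1 - P with hQdef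
  have hPH : Pᴴ = P := hP_herm.symm
  have hQH : Qᴴ = Q := by rw [hQdef, conjTranspose_sub, conjTranspose_one, hPH]
  have hPQ : P * Q = 0 := by rw [hQdef, mul_sub, mul_one, hP_idem, sub_self]
  have hQP : Q * P = 0 := by rw [hQdef, sub_mul, one_mul, hP_idem, sub_self]
  have hQQ : Q * Q = Q := by
    rw [hQdef, mul_sub, mul_one, sub_mul, one_mul, hP_idem, sub_self, sub_zero]
  have hPQsum : P + Q = 1 := by rw [hQdef]; abel
  set A : Matrix (Fin n) (Fin n) ℂ := T * P with hAdef
  set B : Matrix (Fin n) (Fin n) ℂ := P * (T * Q) with hBdef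
  set D : Matrix (Fin n) (Fin n) ℂ := Q * (T * Q) with hDdef
  -- basic products
  have hAP : A * P = A := by rw [hAdef, mul_assoc, hP_idem]
  have hPA : P * A = A := hinv.symm
  have hAQ : A * Q = 0 := by rw [hAdef, mul_assoc, hPQ, mul_zero]
  have hQA : Q * A = 0 := by
    rw [hinv, ← mul_assoc, hQP, zero_mul]
  have hPB : P * B = B := by rw [hBdef, ← mul_assoc, hP_idem]
  have hBQ : B * Q = B := by rw [hBdef, mul_assoc, mul_assoc, hQQ]
  have hBP : B * P = 0 := by rw [hBdef, mul_assoc, mul_assoc, hQP, mul_zero, mul_zero]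
  have hQB : Q * B = 0 := by rw [hBdef, ← mul_assoc, hQP, zero_mul]
  have hQD : Q * D = D := by rw [hDdef, ← mul_assoc, hQQ]
  have hDQ : D * Q = D := by rw [hDdef, mul_assoc, mul_assoc, hQQ]
  have hDP : D * P = 0 := by rw [hDdef, mul_assoc, mul_assoc, hQP, mul_zero, mul_zero]
  have hPD : P * D = 0 := by rw [hDdef, ← mul_assoc, hPQ, zero_mul]
  -- conjTranspose products
  have conj_of : ∀ (X Y Z : Matrix (Fin n) (Fin n) ℂ), X * Y = Z → Yᴴ * Xᴴ = Zᴴ := by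
    intro X Y Z h; rw [← conjTranspose_mul, h]
  have hAHP : Aᴴ * P = Aᴴ := by have := conj_of _ _ _ hPA; rwa [hPH] at this
  have hPAH : P * Aᴴ = Aᴴ := by have := conj_of _ _ _ hAP; rwa [hPH] at this
  have hAHQ : Aᴴ * Q = 0 := by have := conj_of _ _ _ hQA; rwa [hQH, conjTranspose_zero] at this
  have hQAH : Q * Aᴴ = 0 := by have := conj_of _ _ _ hAQ; rwa [hQH, conjTranspose_zero] at this
  have hBHP : Bᴴ * P = Bᴴ := by have := conj_of _ _ _ hPB; rwa [hPH] at this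
  have hQBH : Q * Bᴴ = Bᴴ := by have := conj_of _ _ _ hBQ; rwa [hQH] at this
  have hPBH : P * Bᴴ = 0 := by have := conj_of _ _ _ hBP; rwa [hPH, conjTranspose_zero] at this
  have hBHQ : Bᴴ * Q = 0 := by have := conj_of _ _ _ hQB; rwa [hQH, conjTranspose_zero] at this
  have hDHQ : Dᴴ * Q = Dᴴ := by have := conj_of _ _ _ hQD; rwa [hQH] at this
  have hQDH : Q * Dᴴ = Dᴴ := by have := conj_of _ _ _ hDQ; rwa [hQH] at this
  have hDHP : Dᴴ * P = 0 := by have := conj_of _ _ _ hPD; rwa [hPH, conjTranspose_zero] at this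
  have hPDH : P * Dᴴ = 0 := by have := conj_of _ _ _ hDP; rwa [hPH, conjTranspose_zero] at this
  -- decomposition of S and T
  have hQT : Q * T = D := by
    calc Q * T = Q * (T * (P + Q)) := by rw [hPQsum, mul_one]
    _ = Q * (T * P) + Q * (T * Q) := by rw [mul_add, mul_add]
    _ = Q * A + D := by rw [← hAdef, ← hDdef]
    _ = D := by rw [hQA, zero_add]
  have hS : T * P + (1 - P) * T = A + D := by rw [← hQdef, hQT, ← hAdef]
  have hTQsplit : T * Q = B + D := by
    rw [hBdef, hDdef, ← add_mul, hPQsum, one_mul]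
  have hT : T = A + B + D := by
    calc T = T * (P + Q) := by rw [hPQsum, mul_one]
    _ = A + (B + D) := by rw [mul_add, ← hAdef, hTQsplit]
    _ = A + B + D := by rw [add_assoc]
  -- cross terms vanish
  have hAHD : Aᴴ * D = 0 := by rw [hDdef, ← mul_assoc, hAHQ, zero_mul]
  have hDHA : Dᴴ * A = 0 := by rw [hinv, ← mul_assoc, hDHP, zero_mul]
  have hBHD : Bᴴ * D = 0 := by rw [hDdef, ← mul_assoc, hBHQ, zero_mul]
  have hDHB : Dᴴ * B = 0 := by rw [hBdef, ← mul_assoc, hDHP, zero_mul]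
  have hSS : (T * P + (1 - P) * T)ᴴ * (T * P + (1 - P) * T) = Aᴴ * A + Dᴴ * D := by
    rw [hS, conjTranspose_add, add_mul, mul_add, mul_add, hAHD, hDHA]
    abel
  have hTT : Tᴴ * T = Aᴴ * A + Aᴴ * B + Bᴴ * A + Bᴴ * B + Dᴴ * D := by
    conv_lhs => rw [hT]
    rw [conjTranspose_add, conjTranspose_add]
    simp only [add_mul, mul_add]
    rw [hAHD, hDHA, hBHD, hDHB]
    abel
  -- C = 1 + AᴴA and its inverse K
  set C : Matrix (Fin n) (Fin n) ℂ := 1 + Aᴴ * A with hCdef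
  have hCpd : C.PosDef := Matrix.PosDef.one.add_posSemidef (posSemidef_conjTranspose_mul_self A)
  have hCdet : IsUnit C.det := hCpd.det_pos.ne'.isUnit
  set K : Matrix (Fin n) (Fin n) ℂ := C⁻¹ with hKdef
  have hCK : C * K = 1 := mul_nonsing_inv _ hCdet
  have hKC : K * C = 1 := nonsing_inv_mul _ hCdet
  have hKH : Kᴴ = K := by rw [hKdef, conjTranspose_nonsing_inv, hCpd.1.eq]
  have hCP : C * P = P * C := by
    rw [hCdef, add_mul, mul_add, one_mul, mul_one, mul_assoc Aᴴ A P, hAP,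
      ← mul_assoc P Aᴴ A, hPAH]
  have hKP : K * P = P * K := by
    calc K * P = K * (P * (C * K)) := by rw [hCK, mul_one]
    _ = K * (C * (P * K)) := by rw [← mul_assoc P C, ← hCP, mul_assoc]
    _ = P * K := by rw [← mul_assoc, ← mul_assoc, hKC, one_mul]
  have hKQ : K * Q = Q * K := by
    rw [hQdef, mul_sub, sub_mul, mul_one, one_mul, hKP]
  -- compound vanishing lemmas
  have hAK : A * K = A * K * P := by
    conv_lhs => rw [← hAP]
    rw [mul_assoc, ← hKP, ← mul_assoc]
  have vAKB : A * K * Bᴴ = 0 := by rw [hAK, mul_assoc, hPBH, mul_zero]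
  have hDK : D * K = D * K * Q := by
    conv_lhs => rw [← hDQ]
    rw [mul_assoc, ← hKQ, ← mul_assoc]
  have vDKA : D * K * Aᴴ = 0 := by rw [hDK, mul_assoc, hQAH, mul_zero]
  have hBK : B * K = B * K * Q := by
    conv_lhs => rw [← hBQ]
    rw [mul_assoc, ← hKQ, ← mul_assoc]
  have vBKA : B * K * Aᴴ = 0 := by rw [hBK, mul_assoc, hQAH, mul_zero]
  -- the Schur-complement correction term E
  set W : Matrix (Fin n) (Fin n) ℂ := 1 - A * K * Aᴴ with hWdef
  set E : Matrix (Fin n) (Fin n) ℂ := Bᴴ * W * B with hEdef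
  set G : Matrix (Fin n) (Fin n) ℂ := C + Dᴴ * D + E with hGdef
  have hWH : Wᴴ = W := by
    rw [hWdef]
    simp only [conjTranspose_sub, conjTranspose_one, conjTranspose_mul,
      conjTranspose_conjTranspose, hKH]
    noncomm_ring
  have hGH : Gᴴ = G := by
    rw [hGdef, hEdef]
    simp only [conjTranspose_add, conjTranspose_mul, conjTranspose_conjTranspose,
      hCpd.1.eq, hWH]
    noncomm_ring
  -- key identities
  have t1 : C * (K * Aᴴ) = Aᴴ := by rw [← mul_assoc C K Aᴴ, hCK, one_mul]
  have t2 : Dᴴ * D * (K * Aᴴ) = 0 := by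
    rw [mul_assoc Dᴴ D (K * Aᴴ), ← mul_assoc D K Aᴴ, vDKA, mul_zero]
  have t3 : E * (K * Aᴴ) = 0 := by
    rw [hEdef, mul_assoc (Bᴴ * W) B (K * Aᴴ), ← mul_assoc B K Aᴴ, vBKA, mul_zero]
  have g1 : G * (K * Aᴴ) = Aᴴ := by
    rw [hGdef, add_mul, add_mul, t1, t2, t3, add_zero, add_zero]
  have g2 : A * K * G = A := by
    have h := congrArg conjTranspose g1
    simp only [conjTranspose_mul, conjTranspose_conjTranspose, hKH, hGH] at h
    exact h
  -- the nilpotent part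
  set N : Matrix (Fin n) (Fin n) ℂ := Bᴴ * (A * K) with hNdef
  have hNN : N * N = 0 := by
    rw [hNdef, mul_assoc Bᴴ (A * K) (Bᴴ * (A * K)), ← mul_assoc (A * K) Bᴴ (A * K),
      vAKB, zero_mul, mul_zero]
  have hNH : Nᴴ = K * Aᴴ * B := by
    rw [hNdef, conjTranspose_mul, conjTranspose_mul, conjTranspose_conjTranspose, hKH, mul_assoc]
  -- the congruence factorization
  have hfact : (1 + N) * G * (1 + N)ᴴ = 1 + Tᴴ * T := by
    have hLG : (1 + N) * G = G + Bᴴ * A := by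
      rw [add_mul, one_mul, hNdef, mul_assoc, g2]
    have t4 : G * (K * Aᴴ * B) = Aᴴ * B := by
      rw [← mul_assoc G (K * Aᴴ) B, g1]
    rw [hLG, conjTranspose_add, conjTranspose_one, hNH, mul_add, mul_one, add_mul, t4,
      hTT, hGdef, hEdef, hWdef, hCdef]
    noncomm_ring
  -- E is positive semidefinite
  set C' : Matrix (Fin n) (Fin n) ℂ := 1 + A * Aᴴ with hC'def
  have hC'pd : C'.PosDef :=
    Matrix.PosDef.one.add_posSemidef (posSemidef_self_mul_conjTranspose A)
  have hC'A : C' * A = A * C := by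
    rw [hC'def, hCdef, add_mul, mul_add, one_mul, mul_one, mul_assoc A Aᴴ A]
  have t5 : C' * (A * K * Aᴴ) = A * Aᴴ := by
    calc C' * (A * K * Aᴴ) = C' * (A * K) * Aᴴ := by rw [← mul_assoc C' (A * K) Aᴴ]
    _ = C' * A * K * Aᴴ := by rw [← mul_assoc C' A K]
    _ = A * (C * K) * Aᴴ := by rw [hC'A, mul_assoc A C K]
    _ = A * Aᴴ := by rw [hCK, mul_one]
  have hC'W : C' * W = 1 := by
    rw [hWdef, mul_sub, mul_one, t5, hC'def, add_sub_cancel_right]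
  have hWinv : C'⁻¹ = W := inv_eq_right_inv hC'W
  have hEpsd : E.PosSemidef := by
    rw [hEdef, ← hWinv]
    exact (hC'pd.inv.posSemidef).conjTranspose_mul_mul_same B
  -- positive definiteness
  have hMSpd : (1 + (T * P + (1 - P) * T)ᴴ * (T * P + (1 - P) * T)).PosDef :=
    Matrix.PosDef.one.add_posSemidef (posSemidef_conjTranspose_mul_self _)
  have hMTpd : (1 + Tᴴ * T).PosDef :=
    Matrix.PosDef.one.add_posSemidef (posSemidef_conjTranspose_mul_self _)
  have hGMS : G = (1 + (T * P + (1 - P) * T)ᴴ * (T * P + (1 - P) * T)) + E := by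
    rw [hSS, hGdef, hCdef]
    abel
  have hGpd : G.PosDef := by rw [hGMS]; exact hMSpd.add_posSemidef hEpsd
  -- determinants
  have hdetTG : (1 + Tᴴ * T).det = G.det := by
    rw [← hfact, det_mul, det_mul, det_one_add_of_sq_zero hNN, det_conjTranspose,
      det_one_add_of_sq_zero hNN, one_mul, star_one, mul_one]
  -- factorization through the square root of MS
  set MS : Matrix (Fin n) (Fin n) ℂ := 1 + (T * P + (1 - P) * T)ᴴ * (T * P + (1 - P) * T)
    with hMSdef
  set R : Matrix (Fin n) (Fin n) ℂ := (open scoped MatrixOrder in CFC.sqrt MS) with hRdef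
  have hRH : Rᴴ = R := (open scoped MatrixOrder in (CFC.sqrt_nonneg MS).posSemidef.1)
  have hRR : R * R = MS :=
    (open scoped MatrixOrder in CFC.sqrt_mul_sqrt_self MS hMSpd.posSemidef.nonneg)
  have hRdet : IsUnit R.det := by
    refine Ne.isUnit fun h0 => hMSpd.det_pos.ne' ?_
    have : MS.det = 0 := by rw [← hRR, det_mul, h0, mul_zero]
    exact this
  set F : Matrix (Fin n) (Fin n) ℂ := R⁻¹ * E * R⁻¹ with hFdef
  have hFpsd : F.PosSemidef := by
    have := hEpsd.conjTranspose_mul_mul_same R⁻¹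
    rwa [conjTranspose_nonsing_inv, hRH] at this
  have t6 : R * F * R = E := by
    rw [hFdef, ← mul_assoc R (R⁻¹ * E) R⁻¹, ← mul_assoc R R⁻¹ E,
      mul_nonsing_inv _ hRdet, one_mul, mul_assoc E R⁻¹ R, nonsing_inv_mul _ hRdet, mul_one]
  have hGfact : G = R * (1 + F) * R := by
    rw [mul_add R 1 F, mul_one, add_mul, hRR, t6, hGMS]
  obtain ⟨h, hh1, hhdet⟩ := det_one_add_posSemidef hFpsd
  obtain ⟨a, ha, hadet⟩ := posDef_det_real hMSpd
  obtain ⟨b, hb, hbdet⟩ := posDef_det_real hMTpd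
  refine ⟨hMSpd, hMTpd, a, b, ha, hb, hadet, hbdet, ?_⟩
  have hba : (b : ℂ) = (a : ℂ) * (h : ℂ) := by
    calc (b : ℂ) = (1 + Tᴴ * T).det := hbdet.symm
    _ = G.det := hdetTG
    _ = R.det * (1 + F).det * R.det := by rw [hGfact, det_mul, det_mul]
    _ = (R.det * R.det) * (1 + F).det := by ring
    _ = MS.det * (1 + F).det := by rw [← det_mul, hRR]
    _ = (a : ℂ) * (h : ℂ) := by rw [hMSdef, hadet, hhdet]
  have hba' : b = a * h := by exact_mod_cast hba
  nlinarith [hba', ha, hh1]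
end
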